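/- arXiv:1212.1185 — 4 statements merged into one kernel-verified Lean document; each statement's English description precedes it below -/
import Mathlib

section
/- Let n ≥ 3. If f : Sym(n) → Sym(n) is a bijection that preserves Hamming distance, i.e., d_H(f(φ), f(ψ)) = d_H(φ,ψ) for all φ, ψ ∈ Sym(n), then there exist σ, τ ∈ Sym(n) such that either f(φ) = σφτ for all φ ∈ Sym(n), or f(φ) = σφ⁻¹τ for all φ ∈ Sym(n). Consequently the group of Hamming isometries of Sym(n) has order 2·(n!)². -/
/-- The Hamming distance between two permutations: the number of points
where they disagree. -/
def permDist {n : ℕ} (φ ψ : Equiv.Perm (Fin n)) : ℕ :=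
  (Finset.univ.filter fun i => φ i ≠ ψ i).card

open Equiv Finset

namespace IsoProof

variable {n : ℕ}

/-! ### Basic properties of `permDist` -/

lemma permDist_comm (φ ψ : Perm (Fin n)) : permDist φ ψ = permDist ψ φ := by
  unfold permDist; congr 1; ext i; simp [ne_comm]

lemma permDist_eq_card (φ ψ : Perm (Fin n)) : permDist φ ψ = ((ψ⁻¹ * φ).support).card := by
  unfold permDist; congr 1; ext i
  simp [Equiv.Perm.mem_support, Perm.mul_apply, Equiv.Perm.inv_eq_iff_eq, Equiv.symm_apply_eq]

lemma permDist_one (φ : Perm (Fin n)) : permDist φ 1 = φ.support.card := by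
  rw [permDist_eq_card]; simp

lemma permDist_left (σ φ ψ : Perm (Fin n)) :
    permDist (σ * φ) (σ * ψ) = permDist φ ψ := by
  rw [permDist_eq_card, permDist_eq_card]
  congr 2
  rw [mul_inv_rev]
  group

lemma permDist_right (τ φ ψ : Perm (Fin n)) :
    permDist (φ * τ) (ψ * τ) = permDist φ ψ := by
  rw [permDist_eq_card, permDist_eq_card]
  have : (ψ * τ)⁻¹ * (φ * τ) = τ⁻¹ * (ψ⁻¹ * φ) * (τ⁻¹)⁻¹ := by group
  rw [this, Equiv.Perm.support_conj, Finset.card_map]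

lemma permDist_inv (φ ψ : Perm (Fin n)) : permDist φ⁻¹ ψ⁻¹ = permDist φ ψ := by
  rw [permDist_eq_card, permDist_eq_card]
  have h1 : (ψ⁻¹)⁻¹ * φ⁻¹ = (φ * ψ⁻¹)⁻¹ := by group
  rw [h1, Equiv.Perm.support_inv]
  have h2 : φ * ψ⁻¹ = φ * (ψ⁻¹ * φ) * φ⁻¹ := by group
  rw [h2, Equiv.Perm.support_conj, Finset.card_map]

lemma permDist_localize (φ ρ : Perm (Fin n)) (S : Finset (Fin n))
    (hρ : ∀ i, i ∉ S → ρ i = i) :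
    (permDist φ ρ : ℤ) - permDist φ 1 =
      ∑ i ∈ S, ((if φ i = ρ i then 0 else 1) - (if φ i = i then (0:ℤ) else 1)) := by
  have key : ∀ χ : Perm (Fin n), (permDist φ χ : ℤ) =
      ∑ i ∈ univ, (if φ i = χ i then 0 else 1) := by
    intro χ
    unfold permDist
    rw [Finset.card_filter]
    push_cast
    congr 1; ext i
    by_cases h : φ i = χ i <;> simp [h]
  rw [key ρ, key 1, ← Finset.sum_sub_distrib]
  refine (Finset.sum_subset (Finset.subset_univ S) ?_).symm
  intro i _ hi
  rw [hρ i hi]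
  by_cases h : φ i = i <;> simp [h]

/-! ### Finset card helpers -/

lemma card_pair' {a b : Fin n} (hab : a ≠ b) : ({a, b} : Finset (Fin n)).card = 2 := by
  rw [card_insert_of_notMem (by simp [hab]), card_singleton]

lemma card_triple {a b c : Fin n} (hab : a ≠ b) (hac : a ≠ c) (hbc : b ≠ c) :
    ({a, b, c} : Finset (Fin n)).card = 3 := by
  rw [card_insert_of_notMem (by simp [hab, hac]), card_pair' hbc]

lemma card_quad {a b c d : Fin n} (hab : a ≠ b) (hac : a ≠ c) (had : a ≠ d)
    (hbc : b ≠ c) (hbd : b ≠ d) (hcd : c ≠ d) :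
    ({a, b, c, d} : Finset (Fin n)).card = 4 := by
  rw [card_insert_of_notMem (by simp [hab, hac, had]), card_triple hbc hbd hcd]

lemma isSwap_eq_swap_of_support {f : Perm (Fin n)} (h : f.IsSwap) {x y : Fin n}
    (hxy : x ≠ y) (hsupp : f.support = {x, y}) : f = Equiv.swap x y := by
  obtain ⟨u, v, huv, rfl⟩ := h
  rw [Equiv.Perm.support_swap huv] at hsupp
  have hu : u ∈ ({x, y} : Finset (Fin n)) := hsupp ▸ (by simp)
  have hv : v ∈ ({x, y} : Finset (Fin n)) := hsupp ▸ (by simp)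
  simp only [mem_insert, mem_singleton] at hu hv
  rcases hu with rfl | rfl
  · rcases hv with rfl | rfl
    · exact absurd rfl huv
    · rfl
  · rcases hv with rfl | rfl
    · exact Equiv.swap_comm _ _
    · exact absurd rfl huv

/-! ### The 3-cycle `a ↦ b ↦ c ↦ a` and its properties -/

def c3 (a b c : Fin n) : Perm (Fin n) := Equiv.swap a b * Equiv.swap b c

lemma c3_a {a b c : Fin n} (hab : a ≠ b) (hac : a ≠ c) : c3 a b c a = b := by
  simp [c3, Perm.mul_apply, Equiv.swap_apply_of_ne_of_ne hab hac]

lemma c3_b {a b c : Fin n} (hac : a ≠ c) (hbc : b ≠ c) : c3 a b c b = c := by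
  simp [c3, Perm.mul_apply, Equiv.swap_apply_of_ne_of_ne hac.symm hbc.symm]

lemma c3_c {a b c : Fin n} : c3 a b c c = a := by
  simp [c3, Perm.mul_apply]

lemma c3_other {a b c x : Fin n} (hxa : x ≠ a) (hxb : x ≠ b) (hxc : x ≠ c) :
    c3 a b c x = x := by
  simp [c3, Perm.mul_apply, Equiv.swap_apply_of_ne_of_ne hxb hxc,
    Equiv.swap_apply_of_ne_of_ne hxa hxb]

lemma c3_support {a b c : Fin n} (hab : a ≠ b) (hac : a ≠ c) (hbc : b ≠ c) :
    (c3 a b c).support = {a, b, c} := by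
  ext x
  simp only [Equiv.Perm.mem_support, mem_insert, mem_singleton]
  rcases eq_or_ne x a with rfl | hxa
  · simp [c3_a hab hac, hab.symm]
  rcases eq_or_ne x b with rfl | hxb
  · simp [c3_b hac hbc, hbc, hbc.symm, hxa.symm]
  rcases eq_or_ne x c with rfl | hxc
  · simp [c3_c, hac.symm, hxa.symm, hxb.symm]
  · simp [c3_other hxa hxb hxc, hxa, hxb, hxc]

lemma c3_support_card {a b c : Fin n} (hab : a ≠ b) (hac : a ≠ c) (hbc : b ≠ c) :
    (c3 a b c).support.card = 3 := by
  rw [c3_support hab hac hbc]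
  exact card_triple hab hac hbc

lemma c3_inv {a b c : Fin n} (hab : a ≠ b) (hac : a ≠ c) (hbc : b ≠ c) :
    (c3 a b c)⁻¹ = c3 a c b := by
  rw [eq_comm, eq_inv_iff_mul_eq_one]
  ext x
  rcases eq_or_ne x a with rfl | hxa
  · simp [Perm.mul_apply, c3_a hab hac, c3_c]
  rcases eq_or_ne x b with rfl | hxb
  · simp [Perm.mul_apply, c3_b hac hbc, c3_b hab hbc.symm]
  rcases eq_or_ne x c with rfl | hxc
  · simp [Perm.mul_apply, c3_c, c3_a hac hab]
  · simp [Perm.mul_apply, c3_other hxa hxb hxc, c3_other hxa hxc hxb]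

/-! ### Explicit distance computations -/

lemma permDist_filter_eq (φ ψ : Perm (Fin n)) (s : Finset (Fin n))
    (h : ∀ x, φ x ≠ ψ x ↔ x ∈ s) : permDist φ ψ = s.card := by
  unfold permDist
  congr 1
  ext x
  simp [h x]

lemma dist_swap_share {a b c : Fin n} (hab : a ≠ b) (hac : a ≠ c) (hbc : b ≠ c) :
    permDist (Equiv.swap a b) (Equiv.swap a c) = 3 := by
  rw [permDist_filter_eq _ _ {a, b, c} ?_]
  · exact card_triple hab hac hbc
  intro x
  simp only [mem_insert, mem_singleton]
  rcases eq_or_ne x a with rfl | hxa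
  · simp [Equiv.swap_apply_left, hbc]
  rcases eq_or_ne x b with rfl | hxb
  · simp [Equiv.swap_apply_right, Equiv.swap_apply_of_ne_of_ne hxa hbc, hab.symm, hxa.symm]
  rcases eq_or_ne x c with rfl | hxc
  · simp [Equiv.swap_apply_right, Equiv.swap_apply_of_ne_of_ne hxa hbc.symm, hac, hxa,
      hxa.symm, hxb.symm]
  · simp [Equiv.swap_apply_of_ne_of_ne hxa hxb, Equiv.swap_apply_of_ne_of_ne hxa hxc,
      hxa, hxb, hxc]

lemma dist_swap_disjoint {a b c d : Fin n} (hab : a ≠ b) (hac : a ≠ c) (had : a ≠ d)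
    (hbc : b ≠ c) (hbd : b ≠ d) (hcd : c ≠ d) :
    permDist (Equiv.swap a b) (Equiv.swap c d) = 4 := by
  rw [permDist_filter_eq _ _ {a, b, c, d} ?_]
  · exact card_quad hab hac had hbc hbd hcd
  intro x
  simp only [mem_insert, mem_singleton]
  rcases eq_or_ne x a with rfl | hxa
  · simp [Equiv.swap_apply_left, Equiv.swap_apply_of_ne_of_ne hac had, hab.symm]
  rcases eq_or_ne x b with rfl | hxb
  · simp [Equiv.swap_apply_right, Equiv.swap_apply_of_ne_of_ne hbc hbd, hab, hxa.symm]
  rcases eq_or_ne x c with rfl | hxc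
  · simp [Equiv.swap_apply_left, Equiv.swap_apply_of_ne_of_ne hac.symm hbc.symm, hcd,
      hxa.symm, hxb.symm]
  rcases eq_or_ne x d with rfl | hxd
  · simp [Equiv.swap_apply_right, Equiv.swap_apply_of_ne_of_ne had.symm hbd.symm, hcd.symm,
      hxa.symm, hxb.symm, hxc.symm]
  · simp [Equiv.swap_apply_of_ne_of_ne hxa hxb, Equiv.swap_apply_of_ne_of_ne hxc hxd,
      hxa, hxb, hxc, hxd]

lemma dist_c3_swap_ab {a b c : Fin n} (hab : a ≠ b) (hac : a ≠ c) (hbc : b ≠ c) :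
    permDist (c3 a b c) (Equiv.swap a b) = 2 := by
  rw [permDist_filter_eq _ _ {b, c} ?_]
  · exact card_pair' hbc
  intro x
  simp only [mem_insert, mem_singleton]
  rcases eq_or_ne x a with rfl | hxa
  · simp [c3_a hab hac, Equiv.swap_apply_left, hab, hac]
  rcases eq_or_ne x b with rfl | hxb
  · simp [c3_b hac hbc, Equiv.swap_apply_right, hac.symm]
  rcases eq_or_ne x c with rfl | hxc
  · simp [c3_c, Equiv.swap_apply_of_ne_of_ne hxa hbc.symm, hac, hac.symm]
  · simp [c3_other hxa hxb hxc, Equiv.swap_apply_of_ne_of_ne hxa hxb, hxa.symm, hxb, hxc]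

lemma dist_c3_swap_bc {a b c : Fin n} (hab : a ≠ b) (hac : a ≠ c) (hbc : b ≠ c) :
    permDist (c3 a b c) (Equiv.swap b c) = 2 := by
  rw [permDist_filter_eq _ _ {a, c} ?_]
  · exact card_pair' hac
  intro x
  simp only [mem_insert, mem_singleton]
  rcases eq_or_ne x a with rfl | hxa
  · simp [c3_a hab hac, Equiv.swap_apply_of_ne_of_ne hab hac, hab, hab.symm]
  rcases eq_or_ne x b with rfl | hxb
  · simp [c3_b hac hbc, Equiv.swap_apply_left, hxa, hxa.symm, hbc]
  rcases eq_or_ne x c with rfl | hxc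
  · simp [c3_c, Equiv.swap_apply_right, hab, hab.symm]
  · simp [c3_other hxa hxb hxc, Equiv.swap_apply_of_ne_of_ne hxb hxc, hxa, hxc]

lemma dist_c3_swap_ac {a b c : Fin n} (hab : a ≠ b) (hac : a ≠ c) (hbc : b ≠ c) :
    permDist (c3 a b c) (Equiv.swap a c) = 2 := by
  rw [permDist_filter_eq _ _ {a, b} ?_]
  · exact card_pair' hab
  intro x
  simp only [mem_insert, mem_singleton]
  rcases eq_or_ne x a with rfl | hxa
  · simp [c3_a hab hac, Equiv.swap_apply_left, hbc]
  rcases eq_or_ne x b with rfl | hxb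
  · simp [c3_b hac hbc, Equiv.swap_apply_of_ne_of_ne hab.symm hbc, hbc.symm, hxa.symm]
  rcases eq_or_ne x c with rfl | hxc
  · simp [c3_c, Equiv.swap_apply_right, hxa, hxb, hxa.symm, hxb.symm]
  · simp [c3_other hxa hxb hxc, Equiv.swap_apply_of_ne_of_ne hxa hxc, hxa, hxb]

lemma dist_c3_c3_same {a b c d : Fin n} (hab : a ≠ b) (hac : a ≠ c) (had : a ≠ d)
    (hbc : b ≠ c) (hbd : b ≠ d) (hcd : c ≠ d) :
    permDist (c3 a b c) (c3 a b d) = 3 := by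
  rw [permDist_filter_eq _ _ {b, c, d} ?_]
  · exact card_triple hbc hbd hcd
  intro x
  simp only [mem_insert, mem_singleton]
  rcases eq_or_ne x a with rfl | hxa
  · simp [c3_a hab hac, c3_a hab had, hab, hac, had, hab.symm, hac.symm, had.symm]
  rcases eq_or_ne x b with rfl | hxb
  · simp [c3_b hac hbc, c3_b had hbd, hcd]
  rcases eq_or_ne x c with rfl | hxc
  · simp [c3_c, c3_other hac.symm hbc.symm hcd, hac, hac.symm]
  rcases eq_or_ne x d with rfl | hxd
  · simp [c3_c, c3_other had.symm hbd.symm hcd.symm, had.symm, hxb.symm, hxc.symm]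
  · simp [c3_other hxa hxb hxc, c3_other hxa hxb hxd, hxb, hxc, hxd]

lemma dist_c3_c3_opp {a b c d : Fin n} (hab : a ≠ b) (hac : a ≠ c) (had : a ≠ d)
    (hbc : b ≠ c) (hbd : b ≠ d) (hcd : c ≠ d) :
    permDist (c3 a b c) (c3 a d b) = 4 := by
  rw [permDist_filter_eq _ _ {a, b, c, d} ?_]
  · exact card_quad hab hac had hbc hbd hcd
  intro x
  simp only [mem_insert, mem_singleton]
  rcases eq_or_ne x a with rfl | hxa
  · simp [c3_a hab hac, c3_a had hab, hbd]
  rcases eq_or_ne x b with rfl | hxb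
  · simp [c3_b hac hbc, c3_c, hac.symm, hxa.symm]
  rcases eq_or_ne x c with rfl | hxc
  · simp [c3_c, c3_other hac.symm hcd hbc.symm, hac, hac.symm, hxa.symm, hxb.symm]
  rcases eq_or_ne x d with rfl | hxd
  · simp [c3_other had.symm hbd.symm hcd.symm, c3_b hab hbd.symm, hbd, hbd.symm,
      hxa.symm, hxb.symm, hxc.symm]
  · simp [c3_other hxa hxb hxc, c3_other hxa hxd hxb, hxa, hxb, hxc, hxd]

/-! ### Distance-2 support lemma -/

lemma mem_support_of_dist_two {ρ : Perm (Fin n)} (hρ : ρ.support.card = 3)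
    {x y : Fin n} (hxy : x ≠ y) (hd : permDist ρ (Equiv.swap x y) = 2) :
    x ∈ ρ.support := by
  by_contra hx
  have hsub : insert x (ρ.support.erase y) ⊆
      Finset.univ.filter fun i => ρ i ≠ Equiv.swap x y i := by
    intro i hi
    simp only [mem_insert, mem_erase] at hi
    simp only [mem_filter, mem_univ, true_and]
    rcases hi with rfl | ⟨hiy, hisupp⟩
    · rw [Equiv.Perm.notMem_support.mp hx, Equiv.swap_apply_left]
      exact hxy
    · have hix : i ≠ x := fun h => hx (h ▸ hisupp)
      rw [Equiv.swap_apply_of_ne_of_ne hix hiy]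
      exact Equiv.Perm.mem_support.mp hisupp
  have h1 : ρ.support.card - 1 ≤ (ρ.support.erase y).card := Finset.pred_card_le_card_erase
  have hxne : x ∉ ρ.support.erase y := fun h => hx (Finset.mem_of_mem_erase h)
  have h2 := Finset.card_le_card hsub
  rw [Finset.card_insert_of_notMem hxne] at h2
  have : permDist ρ (Equiv.swap x y) =
      (Finset.univ.filter fun i => ρ i ≠ Equiv.swap x y i).card := rfl
  omega

lemma swap_support_subset_of_dist_two {ρ : Perm (Fin n)} (hρ : ρ.support.card = 3)
    {x y : Fin n} (hxy : x ≠ y) (hd : permDist ρ (Equiv.swap x y) = 2) :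
    (Equiv.swap x y).support ⊆ ρ.support := by
  rw [Equiv.Perm.support_swap hxy]
  have hy : y ∈ ρ.support := by
    refine mem_support_of_dist_two hρ hxy.symm ?_
    rwa [Equiv.swap_comm]
  have hx := mem_support_of_dist_two hρ hxy hd
  intro i hi
  simp only [mem_insert, mem_singleton] at hi
  rcases hi with rfl | rfl <;> assumption

/-! ### Reconstruction from distances to swaps and 3-cycles -/

lemma K_eq (φ : Perm (Fin n)) {a b : Fin n} (hab : a ≠ b) :
    (permDist φ (Equiv.swap a b) : ℤ) - permDist φ 1 =
      ((if φ a = b then 0 else 1) - (if φ a = a then 0 else 1))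
      + ((if φ b = a then 0 else 1) - (if φ b = b then (0:ℤ) else 1)) := by
  have h := permDist_localize φ (Equiv.swap a b) {a, b} ?_
  · rw [h, Finset.sum_insert (by simp [hab]), Finset.sum_singleton,
      Equiv.swap_apply_left, Equiv.swap_apply_right]
  · intro i hi
    simp only [mem_insert, mem_singleton, not_or] at hi
    exact Equiv.swap_apply_of_ne_of_ne hi.1 hi.2

section Recon

variable {φ ψ : Perm (Fin n)}
  (hd1 : permDist ψ 1 = permDist φ 1)
  (hds : ∀ a b : Fin n, a ≠ b → permDist ψ (Equiv.swap a b) = permDist φ (Equiv.swap a b))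

include hd1 hds

lemma fix_imp_fix : ∀ a, φ a = a → ψ a = a := by
  intro a hφa
  by_contra hψa
  have hab : a ≠ ψ a := Ne.symm hψa
  have e1 := K_eq ψ hab
  have e2 := K_eq φ hab
  rw [hd1, hds a (ψ a) hab] at e1
  rw [e1] at e2
  have h1 : φ a ≠ ψ a := by rw [hφa]; exact hab
  have h2 : φ (ψ a) ≠ a := fun h => hψa (φ.injective (by rw [h, hφa]))
  have h3 : ψ (ψ a) ≠ ψ a := fun h => hψa (ψ.injective (by rw [h]))
  simp only [if_pos hφa, if_pos rfl, if_neg h1, if_neg h2, if_neg h3, if_neg hψa] at e2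
  split_ifs at e2 <;> omega

omit hd1 hds in
lemma fix_iff' (hd1 : permDist ψ 1 = permDist φ 1)
    (hds : ∀ a b : Fin n, a ≠ b → permDist ψ (Equiv.swap a b) =
      permDist φ (Equiv.swap a b)) :
    ∀ a, φ a = a ↔ ψ a = a := by
  intro a
  constructor
  · exact fix_imp_fix hd1 hds a
  · exact fix_imp_fix hd1.symm (fun a b hab => (hds a b hab).symm) a

lemma pair_rel : ∀ a b : Fin n, a ≠ b → ((φ a = b ∨ φ b = a) ↔ (ψ a = b ∨ ψ b = a)) := by
  intro a b hab
  have e1 := K_eq ψ hab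
  have e2 := K_eq φ hab
  rw [hd1, hds a b hab] at e1
  rw [e1] at e2
  have hfa : (if φ a = a then (0:ℤ) else 1) = (if ψ a = a then 0 else 1) := by
    by_cases h : φ a = a
    · rw [if_pos h, if_pos ((fix_iff' hd1 hds a).mp h)]
    · rw [if_neg h, if_neg (fun h' => h ((fix_iff' hd1 hds a).mpr h'))]
  have hfb : (if φ b = b then (0:ℤ) else 1) = (if ψ b = b then 0 else 1) := by
    by_cases h : φ b = b
    · rw [if_pos h, if_pos ((fix_iff' hd1 hds b).mp h)]
    · rw [if_neg h, if_neg (fun h' => h ((fix_iff' hd1 hds b).mpr h'))]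
  rw [hfa, hfb] at e2
  have key : (if φ a = b then (0:ℤ) else 1) + (if φ b = a then 0 else 1)
      = (if ψ a = b then 0 else 1) + (if ψ b = a then 0 else 1) := by linarith [e2]
  constructor
  · intro h
    by_contra hno
    push_neg at hno
    rw [if_neg hno.1, if_neg hno.2] at key
    rcases h with h | h
    · rw [if_pos h] at key
      split_ifs at key <;> omega
    · rw [if_pos h] at key
      split_ifs at key <;> omega
  · intro h
    by_contra hno
    push_neg at hno
    rw [if_neg hno.1, if_neg hno.2] at key
    rcases h with h | h
    · rw [if_pos h] at key
      split_ifs at key <;> omega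
    · rw [if_pos h] at key
      split_ifs at key <;> omega

lemma orient : ∀ x, ψ x = φ x ∨ ψ x = φ⁻¹ x := by
  intro x
  by_cases hfx : φ x = x
  · left
    rw [hfx, (fix_iff' hd1 hds x).mp hfx]
  · have hψx : ψ x ≠ x := fun h => hfx ((fix_iff' hd1 hds x).mpr h)
    have hxb : x ≠ ψ x := Ne.symm hψx
    have := (pair_rel hd1 hds x (ψ x) hxb).mpr (Or.inl rfl)
    rcases this with h | h
    · left; rw [h]
    · right
      rw [eq_comm, Perm.inv_eq_iff_eq]
      exact h.symm

end Recon

/-! ### Structure of support-3 permutations -/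

lemma cycle_eq_c3 {γ : Perm (Fin n)} {x y z : Fin n} (hxy : x ≠ y) (hxz : x ≠ z)
    (hyz : y ≠ z) (hsupp : γ.support = {x, y, z}) (h1 : γ x = y) (h2 : γ y = z)
    (h3 : γ z = x) : γ = c3 x y z := by
  apply Equiv.ext
  intro w
  rcases eq_or_ne w x with rfl | hwx
  · rw [h1, c3_a hxy hxz]
  rcases eq_or_ne w y with rfl | hwy
  · rw [h2, c3_b hxz hyz]
  rcases eq_or_ne w z with rfl | hwz
  · rw [h3, c3_c]
  · rw [c3_other hwx hwy hwz]
    refine Equiv.Perm.notMem_support.mp ?_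
    rw [hsupp]
    simp [hwx, hwy, hwz]

lemma supp3 {γ : Perm (Fin n)} (h : γ.support.card = 3) :
    ∃ a b d : Fin n, a ≠ b ∧ a ≠ d ∧ b ≠ d ∧ γ a = b ∧ γ b = d ∧ γ d = a ∧
      γ.support = {a, b, d} := by
  have hpos : 0 < γ.support.card := by omega
  obtain ⟨a, ha⟩ := Finset.card_pos.mp hpos
  have hγa : γ a ≠ a := Equiv.Perm.mem_support.mp ha
  have hbmem : γ a ∈ γ.support := Equiv.Perm.apply_mem_support.mpr ha
  have hγb : γ (γ a) ≠ γ a := Equiv.Perm.mem_support.mp hbmem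
  have hda : γ (γ a) ≠ a := by
    intro hda
    have hsub : ({a, γ a} : Finset (Fin n)) ⊆ γ.support := by
      intro i hi
      simp only [mem_insert, mem_singleton] at hi
      rcases hi with rfl | rfl <;> assumption
    have hcard2 : ({a, γ a} : Finset (Fin n)).card = 2 := card_pair' (Ne.symm hγa)
    have hpos2 : 0 < (γ.support \ {a, γ a}).card := by
      rw [Finset.card_sdiff_of_subset hsub, hcard2, h]
      omega
    obtain ⟨e, he⟩ := Finset.card_pos.mp hpos2
    rw [Finset.mem_sdiff] at he
    obtain ⟨hesupp, henot⟩ := he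
    simp only [mem_insert, mem_singleton, not_or] at henot
    have hsub3 : ({a, γ a, e} : Finset (Fin n)) ⊆ γ.support := by
      intro i hi
      simp only [mem_insert, mem_singleton] at hi
      rcases hi with rfl | rfl | rfl <;> assumption
    have heq : ({a, γ a, e} : Finset (Fin n)) = γ.support := by
      refine Finset.eq_of_subset_of_card_le hsub3 ?_
      rw [h, card_triple (Ne.symm hγa) (Ne.symm henot.1) (Ne.symm henot.2)]
    have hγe : γ e ∈ ({a, γ a, e} : Finset (Fin n)) := by
      rw [heq]
      exact Equiv.Perm.apply_mem_support.mpr hesupp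
    simp only [mem_insert, mem_singleton] at hγe
    rcases hγe with h' | h' | h'
    · rw [← hda] at h'
      exact henot.2 (γ.injective h')
    · exact henot.1 (γ.injective h')
    · exact (Equiv.Perm.mem_support.mp hesupp) h'
  have hdmem : γ (γ a) ∈ γ.support := Equiv.Perm.apply_mem_support.mpr hbmem
  have hsub3 : ({a, γ a, γ (γ a)} : Finset (Fin n)) ⊆ γ.support := by
    intro i hi
    simp only [mem_insert, mem_singleton] at hi
    rcases hi with rfl | rfl | rfl <;> assumption
  have heq : γ.support = ({a, γ a, γ (γ a)} : Finset (Fin n)) := by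
    refine (Finset.eq_of_subset_of_card_le hsub3 ?_).symm
    rw [h, card_triple (Ne.symm hγa) (Ne.symm hda) (Ne.symm hγb)]
  have hγd : γ (γ (γ a)) = a := by
    have hmem : γ (γ (γ a)) ∈ ({a, γ a, γ (γ a)} : Finset (Fin n)) := by
      rw [← heq]
      exact Equiv.Perm.apply_mem_support.mpr hdmem
    simp only [mem_insert, mem_singleton] at hmem
    rcases hmem with h' | h' | h'
    · exact h'
    · exact absurd (γ.injective h') hda
    · exact absurd h' (Equiv.Perm.mem_support.mp hdmem)
  exact ⟨a, γ a, γ (γ a), Ne.symm hγa, Ne.symm hda, Ne.symm hγb, rfl, rfl, hγd, heq⟩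

lemma cycle_on_three {γ : Perm (Fin n)} {a b c : Fin n} (hab : a ≠ b) (hac : a ≠ c)
    (hbc : b ≠ c) (hsupp : γ.support = {a, b, c}) : γ = c3 a b c ∨ γ = c3 a c b := by
  have hmem : ∀ w : Fin n, w ∈ γ.support ↔ (w = a ∨ w = b ∨ w = c) := by
    intro w; rw [hsupp]; simp
  have hamem : a ∈ γ.support := (hmem a).mpr (Or.inl rfl)
  have hbmem : b ∈ γ.support := (hmem b).mpr (Or.inr (Or.inl rfl))
  have hcmem : c ∈ γ.support := (hmem c).mpr (Or.inr (Or.inr rfl))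
  have hγa : γ a ≠ a := Equiv.Perm.mem_support.mp hamem
  have hγb : γ b ≠ b := Equiv.Perm.mem_support.mp hbmem
  have hγc : γ c ≠ c := Equiv.Perm.mem_support.mp hcmem
  have hva := (hmem (γ a)).mp (Equiv.Perm.apply_mem_support.mpr hamem)
  have hvb := (hmem (γ b)).mp (Equiv.Perm.apply_mem_support.mpr hbmem)
  have hvc := (hmem (γ c)).mp (Equiv.Perm.apply_mem_support.mpr hcmem)
  rcases hva with h1 | h1 | h1
  · exact absurd h1 hγa
  · -- γ a = b
    have h2 : γ b = c := by
      rcases hvb with h' | h' | h'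
      · -- γ b = a : impossible
        exfalso
        rcases hvc with h'' | h'' | h''
        · exact hbc (γ.injective (h''.trans h'.symm)).symm
        · exact hac (γ.injective (h''.trans h1.symm)).symm
        · exact hγc h''
      · exact absurd h' hγb
      · exact h'
    have h3 : γ c = a := by
      rcases hvc with h'' | h'' | h''
      · exact h''
      · exact absurd (γ.injective (h''.trans h1.symm)).symm hac
      · exact absurd h'' hγc
    exact Or.inl (cycle_eq_c3 hab hac hbc hsupp h1 h2 h3)
  · -- γ a = c
    have h2 : γ c = b := by
      rcases hvc with h' | h' | h'
      · -- γ c = a : impossible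
        exfalso
        rcases hvb with h'' | h'' | h''
        · exact hbc (γ.injective (h'.trans h''.symm)).symm
        · exact hγb h''
        · exact hab (γ.injective (h''.trans h1.symm)).symm
      · exact h'
      · exact absurd h' hγc
    have h3 : γ b = a := by
      rcases hvb with h'' | h'' | h''
      · exact h''
      · exact absurd h'' hγb
      · exact absurd (γ.injective (h''.trans h1.symm)).symm hab
    refine Or.inr (cycle_eq_c3 hac hab hbc.symm ?_ h1 h2 h3)
    rw [hsupp]
    ext w; simp; tauto

lemma cycle_dichotomy {γ ψ : Perm (Fin n)} (hcard : γ.support.card = 3)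
    (hd1 : permDist ψ 1 = permDist γ 1)
    (hds : ∀ a b : Fin n, a ≠ b → permDist ψ (Equiv.swap a b) = permDist γ (Equiv.swap a b)) :
    ψ = γ ∨ ψ = γ⁻¹ := by
  obtain ⟨a, b, d, hab, had, hbd, hγa, hγb, hγd, hsupp⟩ := supp3 hcard
  have hsuppψ : ψ.support = {a, b, d} := by
    rw [← hsupp]
    ext x
    simp only [Equiv.Perm.mem_support]
    exact not_congr (fix_iff' hd1 hds x).symm
  have hγeq : γ = c3 a b d := cycle_eq_c3 hab had hbd hsupp hγa hγb hγd
  rcases cycle_on_three hab had hbd hsuppψ with h | h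
  · left; rw [h, hγeq]
  · right; rw [h, hγeq, c3_inv hab had hbd]

lemma recon {φ ψ : Perm (Fin n)}
    (hd1 : permDist ψ 1 = permDist φ 1)
    (hds : ∀ a b : Fin n, a ≠ b → permDist ψ (Equiv.swap a b) = permDist φ (Equiv.swap a b))
    (hd3 : ∀ a b c : Fin n, a ≠ b → a ≠ c → b ≠ c →
      permDist ψ (c3 a b c) = permDist φ (c3 a b c)) :
    ψ = φ := by
  apply Equiv.ext
  intro x
  by_contra hne
  have hψφ : ψ x = φ⁻¹ x := by
    rcases orient hd1 hds x with h | h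
    · exact absurd h hne
    · exact h
  have hfx : φ x ≠ x := by
    intro h
    exact hne (((fix_iff' hd1 hds x).mp h).trans h.symm)
  have hxb : x ≠ φ x := Ne.symm hfx
  have hcx : φ (φ x) ≠ x := by
    intro h
    apply hne
    rw [hψφ, Perm.inv_eq_iff_eq, h]
  have hcb : φ (φ x) ≠ φ x := fun h => hfx (φ.injective h)
  have hxc : x ≠ φ (φ x) := Ne.symm hcx
  have hbc : φ x ≠ φ (φ x) := Ne.symm hcb
  have hout : ∀ i, i ∉ ({x, φ x, φ (φ x)} : Finset (Fin n)) →
      (c3 x (φ x) (φ (φ x))) i = i := by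
    intro i hi
    simp only [mem_insert, mem_singleton, not_or] at hi
    exact c3_other hi.1 hi.2.1 hi.2.2
  have Eφ := permDist_localize φ (c3 x (φ x) (φ (φ x))) {x, φ x, φ (φ x)} hout
  have Eψ := permDist_localize ψ (c3 x (φ x) (φ (φ x))) {x, φ x, φ (φ x)} hout
  rw [hd1, hd3 x (φ x) (φ (φ x)) hxb hxc hbc] at Eψ
  have main := Eψ.symm.trans Eφ
  rw [Finset.sum_insert (by simp [hxb, hxc]), Finset.sum_insert (by simp [hbc]),
    Finset.sum_singleton, Finset.sum_insert (by simp [hxb, hxc]),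
    Finset.sum_insert (by simp [hbc]), Finset.sum_singleton,
    c3_a hxb hxc, c3_b hxc hbc, c3_c] at main
  -- discharge the known if-conditions
  have hψxb : ψ x ≠ φ x := fun h => hne (h ▸ rfl)
  have hψxx : ψ x ≠ x := fun h => hfx ((fix_iff' hd1 hds x).mpr h)
  have hψbb : ψ (φ x) ≠ φ x := fun h => hcb ((fix_iff' hd1 hds (φ x)).mpr h)
  have hψcc : ψ (φ (φ x)) ≠ φ (φ x) := by
    intro h
    have := (fix_iff' hd1 hds (φ (φ x))).mpr h
    exact hbc (φ.injective this).symm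
  rw [if_neg hψxb, if_neg hψxx, if_neg hψbb, if_neg hψcc, if_pos rfl, if_neg hfx,
    if_pos rfl, if_neg hcb, if_neg (fun h => hcb (φ.injective h))] at main
  split_ifs at main with h1 h2 h3 <;> try omega
  have := (pair_rel hd1 hds x (φ (φ x)) hxc).mpr (Or.inr h2)
  rcases this with h | h
  · exact hbc h
  · exact h3 h

/-! ### Swap helpers -/

lemma permDist_eq_zero_iff {φ ψ : Perm (Fin n)} : permDist φ ψ = 0 ↔ φ = ψ := by
  unfold permDist
  rw [Finset.card_eq_zero, Finset.filter_eq_empty_iff]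
  constructor
  · intro h
    apply Equiv.ext
    intro x
    have := h (Finset.mem_univ x)
    simpa using this
  · intro h x _
    simp [h]

lemma swap_of_mem_support {u v p : Fin n} (huv : u ≠ v)
    (hp : p ∈ (Equiv.swap u v).support) : ∃ q, q ≠ p ∧ Equiv.swap u v = Equiv.swap p q := by
  rw [Equiv.Perm.support_swap huv, mem_insert, mem_singleton] at hp
  rcases hp with rfl | rfl
  · exact ⟨v, huv.symm, rfl⟩
  · exact ⟨u, huv, Equiv.swap_comm u p⟩

lemma swaps_dist_three_intersect {s s' : Perm (Fin n)} (hs : s.IsSwap) (hs' : s'.IsSwap)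
    (hd : permDist s s' = 3) : (s.support ∩ s'.support).Nonempty := by
  by_contra h
  rw [Finset.not_nonempty_iff_eq_empty] at h
  obtain ⟨a, b, hab, rfl⟩ := hs
  obtain ⟨c, d, hcd, rfl⟩ := hs'
  rw [Equiv.Perm.support_swap hab, Equiv.Perm.support_swap hcd] at h
  have hmem : ∀ x ∈ ({a, b} : Finset (Fin n)), x ∉ ({c, d} : Finset (Fin n)) := by
    intro x hx hx'
    have : x ∈ ({a, b} : Finset (Fin n)) ∩ {c, d} := Finset.mem_inter.mpr ⟨hx, hx'⟩
    rw [h] at this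
    exact absurd this (Finset.notMem_empty x)
  have ha := hmem a (by simp)
  have hb := hmem b (by simp)
  simp only [mem_insert, mem_singleton, not_or] at ha hb
  rw [dist_swap_disjoint hab ha.1 ha.2 hb.1 hb.2 hcd] at hd
  omega

lemma swaps_intersect_share {s s' : Perm (Fin n)} (hs : s.IsSwap) (hs' : s'.IsSwap)
    (hne : s ≠ s') (hint : (s.support ∩ s'.support).Nonempty) :
    ∃ p q r : Fin n, q ≠ r ∧ p ≠ q ∧ p ≠ r ∧ s = Equiv.swap p q ∧ s' = Equiv.swap p r := by
  obtain ⟨p, hp⟩ := hint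
  rw [Finset.mem_inter] at hp
  obtain ⟨a, b, hab, rfl⟩ := hs
  obtain ⟨c, d, hcd, rfl⟩ := hs'
  obtain ⟨q, hqp, hq⟩ := swap_of_mem_support hab hp.1
  obtain ⟨r, hrp, hr⟩ := swap_of_mem_support hcd hp.2
  have hpq : p ≠ q := hqp.symm
  have hpr : p ≠ r := hrp.symm
  refine ⟨p, q, r, ?_, hpq, hpr, hq, hr⟩
  intro hqr
  apply hne
  rw [hq, hr, hqr]

lemma dist_swap_share' {p q r : Fin n} (hpq : p ≠ q) (hpr : p ≠ r) (hqr : q ≠ r) :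
    permDist (Equiv.swap p q) (Equiv.swap p r) = 3 := dist_swap_share hpq hpr hqr

/-! ### Isometries fixing 1 -/

section Iso

variable {g : Perm (Fin n) → Perm (Fin n)}
  (hgd : ∀ φ ψ, permDist (g φ) (g ψ) = permDist φ ψ)
  (hg1 : g 1 = 1)

include hgd hg1

omit hg1 in
lemma g_inj : Function.Injective g := by
  intro u v huv
  have : permDist u v = 0 := by
    rw [← hgd, huv, permDist_eq_zero_iff.mpr rfl]
  exact permDist_eq_zero_iff.mp this

lemma g_card_support (φ : Perm (Fin n)) : (g φ).support.card = φ.support.card := by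
  rw [← permDist_one, ← permDist_one]
  conv_lhs => rw [← hg1]
  rw [hgd]

lemma g_isSwap {t : Perm (Fin n)} (ht : t.IsSwap) : (g t).IsSwap := by
  rw [← Equiv.Perm.card_support_eq_two] at ht ⊢
  rw [g_card_support hgd hg1, ht]

lemma triangle_lemma {X : Finset (Fin n)} (hX : X.card = 3) :
    ∃ X' : Finset (Fin n), X'.card = 3 ∧
      ∀ t : Perm (Fin n), t.IsSwap → t.support ⊆ X → (g t).support ⊆ X' := by
  obtain ⟨x, y, z, hxy, hxz, hyz, rfl⟩ := Finset.card_eq_three.mp hX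
  have hkey : ∀ t : Perm (Fin n), t.IsSwap → t.support ⊆ ({x, y, z} : Finset (Fin n)) →
      permDist (c3 x y z) t = 2 := by
    intro t ht hsub
    obtain ⟨u, v, huv, rfl⟩ := ht
    have hu : u ∈ ({x, y, z} : Finset (Fin n)) := by
      apply hsub
      rw [Equiv.Perm.support_swap huv]
      simp
    have hv : v ∈ ({x, y, z} : Finset (Fin n)) := by
      apply hsub
      rw [Equiv.Perm.support_swap huv]
      simp
    simp only [mem_insert, mem_singleton] at hu hv
    rcases hu with rfl | rfl | rfl <;> rcases hv with rfl | rfl | rfl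
    · exact absurd rfl huv
    · exact dist_c3_swap_ab hxy hxz hyz
    · exact dist_c3_swap_ac hxy hxz hyz
    · rw [Equiv.swap_comm]; exact dist_c3_swap_ab hxy hxz hyz
    · exact absurd rfl huv
    · exact dist_c3_swap_bc hxy hxz hyz
    · rw [Equiv.swap_comm]; exact dist_c3_swap_ac hxy hxz hyz
    · rw [Equiv.swap_comm]; exact dist_c3_swap_bc hxy hxz hyz
    · exact absurd rfl huv
  refine ⟨(g (c3 x y z)).support, ?_, ?_⟩
  · rw [g_card_support hgd hg1]
    exact c3_support_card hxy hxz hyz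
  · intro t ht hsub
    have hgc : (g (c3 x y z)).support.card = 3 := by
      rw [g_card_support hgd hg1]
      exact c3_support_card hxy hxz hyz
    obtain ⟨u, v, huv, heq⟩ := g_isSwap hgd hg1 ht
    rw [heq]
    refine swap_support_subset_of_dist_two hgc huv ?_
    rw [← heq, hgd, hkey t ht hsub]

lemma star_lemma (hgb : Function.Bijective g) (hn : 3 ≤ n) (a : Fin n) :
    ∃ p : Fin n, ∀ b : Fin n, b ≠ a → p ∈ (g (Equiv.swap a b)).support := by
  have hcard_univ : 2 < (univ : Finset (Fin n)).card := by
    rw [Finset.card_univ, Fintype.card_fin]; omega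
  obtain ⟨b1, hb1mem, b2, hb2mem, hb12⟩ := Finset.one_lt_card.mp (by
    have h1 : 1 < ((univ : Finset (Fin n)).erase a).card := by
      have := Finset.card_erase_of_mem (Finset.mem_univ a)
      omega
    exact h1)
  have hb1 : b1 ≠ a := Finset.ne_of_mem_erase hb1mem
  have hb2 : b2 ≠ a := Finset.ne_of_mem_erase hb2mem
  have hd12 : permDist (g (Equiv.swap a b1)) (g (Equiv.swap a b2)) = 3 := by
    rw [hgd]
    exact dist_swap_share hb1.symm hb2.symm hb12
  obtain ⟨p, hp⟩ := swaps_dist_three_intersect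
    (g_isSwap hgd hg1 ⟨a, b1, hb1.symm, rfl⟩) (g_isSwap hgd hg1 ⟨a, b2, hb2.symm, rfl⟩) hd12
  rw [Finset.mem_inter] at hp
  obtain ⟨hp1, hp2⟩ := hp
  -- the "other" points of the two image swaps
  obtain ⟨u1, v1, huv1, heq1⟩ := g_isSwap hgd hg1 (⟨a, b1, hb1.symm, rfl⟩ :
    (Equiv.swap a b1).IsSwap)
  obtain ⟨q1, hq1p, heq1'⟩ := swap_of_mem_support huv1 (by rw [← heq1]; exact hp1)
  have hs1 : g (Equiv.swap a b1) = Equiv.swap p q1 := heq1.trans heq1'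
  obtain ⟨u2, v2, huv2, heq2⟩ := g_isSwap hgd hg1 (⟨a, b2, hb2.symm, rfl⟩ :
    (Equiv.swap a b2).IsSwap)
  obtain ⟨q2, hq2p, heq2'⟩ := swap_of_mem_support huv2 (by rw [← heq2]; exact hp2)
  have hs2 : g (Equiv.swap a b2) = Equiv.swap p q2 := heq2.trans heq2'
  have hswapne : Equiv.swap a b1 ≠ Equiv.swap a b2 := by
    intro h
    have := DFunLike.congr_fun h b1
    rw [Equiv.swap_apply_right, Equiv.swap_apply_of_ne_of_ne hb1 hb12] at this
    exact hb1 this.symm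
  have hq12 : q1 ≠ q2 := by
    intro h
    apply hswapne
    apply g_inj hgd
    rw [hs1, hs2, h]
  refine ⟨p, ?_⟩
  intro c hc
  by_cases hcb1 : c = b1
  · subst hcb1; rw [hs1, Equiv.Perm.support_swap hq1p.symm]; simp
  by_cases hcb2 : c = b2
  · subst hcb2; rw [hs2, Equiv.Perm.support_swap hq2p.symm]; simp
  by_contra hpc
  -- the image of swap a c must be swap q1 q2
  have hswapne1 : Equiv.swap a c ≠ Equiv.swap a b1 := by
    intro h
    have := DFunLike.congr_fun h c
    rw [Equiv.swap_apply_right, Equiv.swap_apply_of_ne_of_ne hc (Ne.intro hcb1)] at this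
    exact hc this.symm
  have hswapne2 : Equiv.swap a c ≠ Equiv.swap a b2 := by
    intro h
    have := DFunLike.congr_fun h c
    rw [Equiv.swap_apply_right, Equiv.swap_apply_of_ne_of_ne hc (Ne.intro hcb2)] at this
    exact hc this.symm
  have hq1mem : q1 ∈ (g (Equiv.swap a c)).support := by
    have hd : permDist (g (Equiv.swap a c)) (g (Equiv.swap a b1)) = 3 := by
      rw [hgd]; exact dist_swap_share hc.symm hb1.symm (Ne.intro hcb1)
    obtain ⟨w, hw⟩ := swaps_dist_three_intersect
      (g_isSwap hgd hg1 ⟨a, c, hc.symm, rfl⟩) (g_isSwap hgd hg1 ⟨a, b1, hb1.symm, rfl⟩) hd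
    rw [Finset.mem_inter, hs1, Equiv.Perm.support_swap hq1p.symm] at hw
    obtain ⟨hw1, hw2⟩ := hw
    simp only [mem_insert, mem_singleton] at hw2
    rcases hw2 with rfl | rfl
    · exact absurd hw1 hpc
    · exact hw1
  have hq2mem : q2 ∈ (g (Equiv.swap a c)).support := by
    have hd : permDist (g (Equiv.swap a c)) (g (Equiv.swap a b2)) = 3 := by
      rw [hgd]; exact dist_swap_share hc.symm hb2.symm (Ne.intro hcb2)
    obtain ⟨w, hw⟩ := swaps_dist_three_intersect
      (g_isSwap hgd hg1 ⟨a, c, hc.symm, rfl⟩) (g_isSwap hgd hg1 ⟨a, b2, hb2.symm, rfl⟩) hd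
    rw [Finset.mem_inter, hs2, Equiv.Perm.support_swap hq2p.symm] at hw
    obtain ⟨hw1, hw2⟩ := hw
    simp only [mem_insert, mem_singleton] at hw2
    rcases hw2 with rfl | rfl
    · exact absurd hw1 hpc
    · exact hw1
  have hs3supp : (g (Equiv.swap a c)).support = {q1, q2} := by
    refine (Finset.eq_of_subset_of_card_le ?_ ?_).symm
    · intro i hi
      simp only [mem_insert, mem_singleton] at hi
      rcases hi with rfl | rfl <;> assumption
    · rw [Equiv.Perm.card_support_eq_two.mpr (g_isSwap hgd hg1 ⟨a, c, hc.symm, rfl⟩),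
        card_pair' hq12]
  -- all three images have support inside the 3-set {p, q1, q2}
  have hXcard : ({p, q1, q2} : Finset (Fin n)).card = 3 :=
    card_triple hq1p.symm hq2p.symm hq12
  -- set up the inverse isometry
  set G := Equiv.ofBijective g hgb with hG
  have hgiapp : ∀ u, G.symm (g u) = u := fun u => G.symm_apply_apply u
  have hgiapp' : ∀ u, g (G.symm u) = u := fun u => G.apply_symm_apply u
  have hgind : ∀ α β, permDist (G.symm α) (G.symm β) = permDist α β := by
    intro α β
    conv_rhs => rw [← hgiapp' α, ← hgiapp' β]
    rw [hgd]
  have hgi1 : G.symm 1 = 1 := by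
    conv_lhs => rw [← hg1]
    exact hgiapp 1
  obtain ⟨X', hX'card, hX'⟩ := triangle_lemma hgind hgi1 hXcard
  have hsubX : ∀ s : Perm (Fin n), s = g (Equiv.swap a c) ∨ (s = g (Equiv.swap a b1) ∨
      s = g (Equiv.swap a b2)) → s.IsSwap ∧ s.support ⊆ ({p, q1, q2} : Finset (Fin n)) := by
    intro s hcases
    rcases hcases with rfl | rfl | rfl
    · refine ⟨g_isSwap hgd hg1 ⟨a, c, hc.symm, rfl⟩, ?_⟩
      rw [hs3supp]
      intro i hi
      simp only [mem_insert, mem_singleton] at hi ⊢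
      tauto
    · refine ⟨g_isSwap hgd hg1 ⟨a, b1, hb1.symm, rfl⟩, ?_⟩
      rw [hs1, Equiv.Perm.support_swap hq1p.symm]
      intro i hi
      simp only [mem_insert, mem_singleton] at hi ⊢
      tauto
    · refine ⟨g_isSwap hgd hg1 ⟨a, b2, hb2.symm, rfl⟩, ?_⟩
      rw [hs2, Equiv.Perm.support_swap hq2p.symm]
      intro i hi
      simp only [mem_insert, mem_singleton] at hi ⊢
      tauto
  have hsub1 := hX' _ (hsubX _ (Or.inr (Or.inl rfl))).1 (hsubX _ (Or.inr (Or.inl rfl))).2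
  have hsub2 := hX' _ (hsubX _ (Or.inr (Or.inr rfl))).1 (hsubX _ (Or.inr (Or.inr rfl))).2
  have hsub3 := hX' _ (hsubX _ (Or.inl rfl)).1 (hsubX _ (Or.inl rfl)).2
  rw [hgiapp] at hsub1 hsub2 hsub3
  have hmem4 : ({a, b1, b2, c} : Finset (Fin n)) ⊆ X' := by
    intro i hi
    simp only [mem_insert, mem_singleton] at hi
    rcases hi with rfl | rfl | rfl | rfl
    · exact hsub1 (by rw [Equiv.Perm.support_swap hb1.symm]; simp)
    · exact hsub1 (by rw [Equiv.Perm.support_swap hb1.symm]; simp)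
    · exact hsub2 (by rw [Equiv.Perm.support_swap hb2.symm]; simp)
    · exact hsub3 (by rw [Equiv.Perm.support_swap hc.symm]; simp)
  have hcard4 : ({a, b1, b2, c} : Finset (Fin n)).card = 4 :=
    card_quad hb1.symm hb2.symm hc.symm hb12 (fun h => hcb1 h.symm) (fun h => hcb2 h.symm)
  have := Finset.card_le_card hmem4
  omega

lemma exists_sigma (hgb : Function.Bijective g) (hn : 3 ≤ n) :
    ∃ σ : Perm (Fin n), ∀ a b : Fin n, a ≠ b →
      g (Equiv.swap a b) = Equiv.swap (σ a) (σ b) := by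
  choose s hs using star_lemma hgd hg1 hgb hn
  have hinj : Function.Injective s := by
    intro a a' haa'
    by_contra hne
    obtain ⟨c, hc⟩ : ∃ c : Fin n, c ∉ ({a, a'} : Finset (Fin n)) := by
      by_contra h
      push_neg at h
      have hsub : (univ : Finset (Fin n)) ⊆ {a, a'} := fun x _ => h x
      have hle := Finset.card_le_card hsub
      rw [Finset.card_univ, Fintype.card_fin, card_pair' hne] at hle
      omega
    simp only [mem_insert, mem_singleton, not_or] at hc
    have hXcard : ({a, a', c} : Finset (Fin n)).card = 3 :=
      card_triple hne (Ne.symm hc.1) (Ne.symm hc.2)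
    obtain ⟨X', hX'card, hX'⟩ := triangle_lemma hgd hg1 hXcard
    -- three swaps with support in {a,a',c}
    have hsw1 : (Equiv.swap a a').IsSwap := ⟨a, a', hne, rfl⟩
    have hsw2 : (Equiv.swap a c).IsSwap := ⟨a, c, (Ne.symm hc.1), rfl⟩
    have hsw3 : (Equiv.swap a' c).IsSwap := ⟨a', c, (Ne.symm hc.2), rfl⟩
    have hss1 : (Equiv.swap a a').support ⊆ ({a, a', c} : Finset (Fin n)) := by
      rw [Equiv.Perm.support_swap hne]
      intro i hi; simp only [mem_insert, mem_singleton] at hi ⊢; tauto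
    have hss2 : (Equiv.swap a c).support ⊆ ({a, a', c} : Finset (Fin n)) := by
      rw [Equiv.Perm.support_swap (Ne.symm hc.1)]
      intro i hi; simp only [mem_insert, mem_singleton] at hi ⊢; tauto
    have hss3 : (Equiv.swap a' c).support ⊆ ({a, a', c} : Finset (Fin n)) := by
      rw [Equiv.Perm.support_swap (Ne.symm hc.2)]
      intro i hi; simp only [mem_insert, mem_singleton] at hi ⊢; tauto
    have hp1 : s a ∈ (g (Equiv.swap a a')).support := hs a a' (Ne.symm hne)
    have hp2 : s a ∈ (g (Equiv.swap a c)).support := hs a c hc.1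
    have hp3 : s a ∈ (g (Equiv.swap a' c)).support := by rw [haa']; exact hs a' c hc.2
    -- extract "other" points
    obtain ⟨u1, v1, huv1, heq1⟩ := g_isSwap hgd hg1 hsw1
    obtain ⟨q1, hq1p, heq1'⟩ := swap_of_mem_support huv1 (by rw [← heq1]; exact hp1)
    have hgs1 : g (Equiv.swap a a') = Equiv.swap (s a) q1 := heq1.trans heq1'
    obtain ⟨u2, v2, huv2, heq2⟩ := g_isSwap hgd hg1 hsw2
    obtain ⟨q2, hq2p, heq2'⟩ := swap_of_mem_support huv2 (by rw [← heq2]; exact hp2)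
    have hgs2 : g (Equiv.swap a c) = Equiv.swap (s a) q2 := heq2.trans heq2'
    obtain ⟨u3, v3, huv3, heq3⟩ := g_isSwap hgd hg1 hsw3
    obtain ⟨q3, hq3p, heq3'⟩ := swap_of_mem_support huv3 (by rw [← heq3]; exact hp3)
    have hgs3 : g (Equiv.swap a' c) = Equiv.swap (s a) q3 := heq3.trans heq3'
    -- distinctness of the three original swaps
    have hne12 : Equiv.swap a a' ≠ Equiv.swap a c := by
      intro h
      have := DFunLike.congr_fun h a'
      rw [Equiv.swap_apply_right, Equiv.swap_apply_of_ne_of_ne (Ne.symm hne) (Ne.symm hc.2)] at this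
      exact hne this
    have hne13 : Equiv.swap a a' ≠ Equiv.swap a' c := by
      intro h
      have := DFunLike.congr_fun h a
      rw [Equiv.swap_apply_left, Equiv.swap_apply_of_ne_of_ne hne (Ne.symm hc.1)] at this
      exact hne this.symm
    have hne23 : Equiv.swap a c ≠ Equiv.swap a' c := by
      intro h
      have := DFunLike.congr_fun h a
      rw [Equiv.swap_apply_left, Equiv.swap_apply_of_ne_of_ne hne (Ne.symm hc.1)] at this
      exact hc.1 this
    have hq12 : q1 ≠ q2 := fun h =>
      hne12 (g_inj hgd (by rw [hgs1, hgs2, h]))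
    have hq13 : q1 ≠ q3 := fun h =>
      hne13 (g_inj hgd (by rw [hgs1, hgs3, h]))
    have hq23 : q2 ≠ q3 := fun h =>
      hne23 (g_inj hgd (by rw [hgs2, hgs3, h]))
    -- all qi lie in X'.erase (s a)
    have hqmem : ∀ i : Fin n, i = q1 ∨ i = q2 ∨ i = q3 → i ∈ X'.erase (s a) := by
      intro i hi
      rcases hi with rfl | rfl | rfl
      · refine Finset.mem_erase.mpr ⟨hq1p, ?_⟩
        have := hX' _ hsw1 hss1
        rw [hgs1, Equiv.Perm.support_swap hq1p.symm] at this
        exact this (by simp)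
      · refine Finset.mem_erase.mpr ⟨hq2p, ?_⟩
        have := hX' _ hsw2 hss2
        rw [hgs2, Equiv.Perm.support_swap hq2p.symm] at this
        exact this (by simp)
      · refine Finset.mem_erase.mpr ⟨hq3p, ?_⟩
        have := hX' _ hsw3 hss3
        rw [hgs3, Equiv.Perm.support_swap hq3p.symm] at this
        exact this (by simp)
    have hsa : s a ∈ X' := by
      have := hX' _ hsw1 hss1
      rw [hgs1, Equiv.Perm.support_swap hq1p.symm] at this
      exact this (by simp)
    have hsub : ({q1, q2, q3} : Finset (Fin n)) ⊆ X'.erase (s a) := by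
      intro i hi
      simp only [mem_insert, mem_singleton] at hi
      exact hqmem i hi
    have h1 := Finset.card_le_card hsub
    rw [card_triple hq12 hq13 hq23, Finset.card_erase_of_mem hsa, hX'card] at h1
    omega
  have hbij : Function.Bijective s := Finite.injective_iff_bijective.mp hinj
  refine ⟨Equiv.ofBijective s hbij, ?_⟩
  intro a b hab
  have ht : (g (Equiv.swap a b)).IsSwap := g_isSwap hgd hg1 ⟨a, b, hab, rfl⟩
  have hσa : s a ∈ (g (Equiv.swap a b)).support := hs a b (Ne.symm hab)
  have hσb : s b ∈ (g (Equiv.swap a b)).support := by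
    have := hs b a hab
    rwa [Equiv.swap_comm b a] at this
  have hσab : s a ≠ s b := fun h => hab (hinj h)
  have hsupp : (g (Equiv.swap a b)).support = {s a, s b} := by
    refine (Finset.eq_of_subset_of_card_le ?_ ?_).symm
    · intro i hi
      simp only [mem_insert, mem_singleton] at hi
      rcases hi with rfl | rfl <;> assumption
    · rw [Equiv.Perm.card_support_eq_two.mpr ht, card_pair' hσab]
  exact isSwap_eq_swap_of_support ht hσab hsupp

end Iso

/-! ### Isometries fixing 1 and all transpositions -/

lemma c3_ne_inv' {γ : Perm (Fin n)} (hγ : γ.support.card = 3) : γ ≠ γ⁻¹ := by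
  obtain ⟨a, b, d, hab, had, hbd, h1, h2, h3, hsupp⟩ := supp3 hγ
  intro heq
  have : γ⁻¹ a = d := by rw [Perm.inv_eq_iff_eq, h3]
  rw [← heq, h1] at this
  exact hbd (this ▸ rfl)

section H

variable {h : Perm (Fin n) → Perm (Fin n)}
  (hhd : ∀ φ ψ, permDist (h φ) (h ψ) = permDist φ ψ)
  (hh1 : h 1 = 1)
  (hhsw : ∀ a b : Fin n, a ≠ b → h (Equiv.swap a b) = Equiv.swap a b)

include hhd hh1 hhsw

omit hhsw in
lemma h_dist_one (φ : Perm (Fin n)) : permDist (h φ) 1 = permDist φ 1 := by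
  conv_lhs => rw [← hh1]
  rw [hhd]

omit hh1 in
lemma h_dist_swap (φ : Perm (Fin n)) {a b : Fin n} (hab : a ≠ b) :
    permDist (h φ) (Equiv.swap a b) = permDist φ (Equiv.swap a b) := by
  conv_lhs => rw [← hhsw a b hab]
  rw [hhd]

lemma h_cycle {γ : Perm (Fin n)} (hγ : γ.support.card = 3) : h γ = γ ∨ h γ = γ⁻¹ := by
  refine cycle_dichotomy hγ (h_dist_one hhd hh1 γ) ?_
  intro a b hab
  exact h_dist_swap hhd hhsw γ hab

lemma prop2 {γ γ' : Perm (Fin n)} (hγ3 : γ.support.card = 3) (hγ'3 : γ'.support.card = 3)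
    (hγfix : h γ = γ) (hshare : (γ.support ∩ γ'.support).card = 2) : h γ' = γ' := by
  rcases h_cycle hhd hh1 hhsw hγ'3 with hfix' | hinv'
  · exact hfix'
  exfalso
  -- extract labels a b (shared), c, d
  obtain ⟨a, b, hab, hI⟩ := Finset.card_eq_two.mp hshare
  have hIsub : γ.support ∩ γ'.support ⊆ γ.support := Finset.inter_subset_left
  have hIsub' : γ.support ∩ γ'.support ⊆ γ'.support := Finset.inter_subset_right
  have hcc : (γ.support \ (γ.support ∩ γ'.support)).card = 1 := by
    rw [Finset.card_sdiff_of_subset hIsub, hshare, hγ3]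
  obtain ⟨c, hc⟩ := Finset.card_eq_one.mp hcc
  have hcc' : (γ'.support \ (γ.support ∩ γ'.support)).card = 1 := by
    rw [Finset.card_sdiff_of_subset hIsub', hshare, hγ'3]
  obtain ⟨d, hd⟩ := Finset.card_eq_one.mp hcc'
  have hcmem : c ∈ γ.support \ (γ.support ∩ γ'.support) := by rw [hc]; simp
  have hdmem : d ∈ γ'.support \ (γ.support ∩ γ'.support) := by rw [hd]; simp
  rw [Finset.mem_sdiff] at hcmem hdmem
  have hsuppγ : γ.support = {a, b, c} := by
    ext x
    constructor
    · intro hx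
      by_cases hxI : x ∈ γ.support ∩ γ'.support
      · rw [hI] at hxI
        simp only [mem_insert, mem_singleton] at hxI ⊢
        tauto
      · have : x ∈ γ.support \ (γ.support ∩ γ'.support) := Finset.mem_sdiff.mpr ⟨hx, hxI⟩
        rw [hc] at this
        simp only [mem_singleton] at this
        simp [this]
    · intro hx
      simp only [mem_insert, mem_singleton] at hx
      rcases hx with rfl | rfl | rfl
      · exact hIsub (by rw [hI]; simp)
      · exact hIsub (by rw [hI]; simp)
      · exact hcmem.1
  have hsuppγ' : γ'.support = {a, b, d} := by
    ext x
    constructor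
    · intro hx
      by_cases hxI : x ∈ γ.support ∩ γ'.support
      · rw [hI] at hxI
        simp only [mem_insert, mem_singleton] at hxI ⊢
        tauto
      · have : x ∈ γ'.support \ (γ.support ∩ γ'.support) := Finset.mem_sdiff.mpr ⟨hx, hxI⟩
        rw [hd] at this
        simp only [mem_singleton] at this
        simp [this]
    · intro hx
      simp only [mem_insert, mem_singleton] at hx
      rcases hx with rfl | rfl | rfl
      · exact hIsub' (by rw [hI]; simp)
      · exact hIsub' (by rw [hI]; simp)
      · exact hdmem.1
  -- distinctness
  have hamem : a ∈ γ.support ∩ γ'.support := by rw [hI]; simp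
  have hbmem : b ∈ γ.support ∩ γ'.support := by rw [hI]; simp
  have hac : a ≠ c := fun h' => hcmem.2 (h' ▸ hamem)
  have hbc : b ≠ c := fun h' => hcmem.2 (h' ▸ hbmem)
  have had : a ≠ d := fun h' => hdmem.2 (h' ▸ hamem)
  have hbd : b ≠ d := fun h' => hdmem.2 (h' ▸ hbmem)
  have hcd : c ≠ d := fun h' => hcmem.2 (Finset.mem_inter.mpr ⟨hcmem.1, h' ▸ hdmem.1⟩)
  -- the distance equation
  have heq : permDist γ γ'⁻¹ = permDist γ γ' := by
    have := hhd γ γ'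
    rw [hγfix, hinv'] at this
    exact this
  -- case analysis on orientations
  have e1 : permDist (c3 a c b) (c3 a b d) = 4 := by
    rw [← permDist_inv, c3_inv hac hab (Ne.symm hbc), c3_inv hab had hbd]
    exact dist_c3_c3_opp hab hac had hbc hbd hcd
  have e2 : permDist (c3 a c b) (c3 a d b) = 3 := by
    rw [← permDist_inv, c3_inv hac hab (Ne.symm hbc), c3_inv had hab (Ne.symm hbd)]
    exact dist_c3_c3_same hab hac had hbc hbd hcd
  rcases cycle_on_three hab hac hbc hsuppγ with rfl | rfl <;>
    rcases cycle_on_three hab had hbd hsuppγ' with h' | h' <;> rw [h'] at heq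
  · rw [c3_inv hab had hbd, dist_c3_c3_same hab hac had hbc hbd hcd,
      dist_c3_c3_opp hab hac had hbc hbd hcd] at heq
    omega
  · rw [c3_inv had hab (Ne.symm hbd), dist_c3_c3_opp hab hac had hbc hbd hcd,
      dist_c3_c3_same hab hac had hbc hbd hcd] at heq
    omega
  · rw [c3_inv hab had hbd, e1, e2] at heq
    omega
  · rw [c3_inv had hab (Ne.symm hbd), e1, e2] at heq
    omega

lemma allfix {e0 e1 e2 : Fin n} (h01 : e0 ≠ e1) (h02 : e0 ≠ e2) (h12 : e1 ≠ e2)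
    (hbase : h (c3 e0 e1 e2) = c3 e0 e1 e2) :
    ∀ γ : Perm (Fin n), γ.support.card = 3 → h γ = γ := by
  suffices H : ∀ k, ∀ γ : Perm (Fin n), γ.support.card = 3 →
      (γ.support \ ({e0, e1, e2} : Finset (Fin n))).card ≤ k → h γ = γ by
    intro γ hγ
    exact H _ γ hγ le_rfl
  intro k
  induction k with
  | zero =>
    intro γ hγ hle
    have hempty : γ.support \ ({e0, e1, e2} : Finset (Fin n)) = ∅ :=
      Finset.card_eq_zero.mp (Nat.le_zero.mp hle)
    have hsub : γ.support ⊆ ({e0, e1, e2} : Finset (Fin n)) := by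
      intro i hi
      by_contra hnot
      have : i ∈ γ.support \ ({e0, e1, e2} : Finset (Fin n)) :=
        Finset.mem_sdiff.mpr ⟨hi, hnot⟩
      rw [hempty] at this
      exact absurd this (Finset.notMem_empty i)
    have hsupp : γ.support = {e0, e1, e2} := by
      refine Finset.eq_of_subset_of_card_le hsub ?_
      rw [hγ, card_triple h01 h02 h12]
    rcases cycle_on_three h01 h02 h12 hsupp with rfl | rfl
    · exact hbase
    · rcases h_cycle hhd hh1 hhsw hγ with hfix | hinv
      · exact hfix
      exfalso
      have hinv2 : h (c3 e0 e2 e1) = c3 e0 e1 e2 := by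
        rw [hinv, c3_inv h02 h01 (Ne.symm h12)]
      have heq2 : c3 e0 e2 e1 = c3 e0 e1 e2 := g_inj hhd (hinv2.trans hbase.symm)
      have := DFunLike.congr_fun heq2 e0
      rw [c3_a h02 h01, c3_a h01 h02] at this
      exact h12 this.symm
  | succ k ih =>
    intro γ hγ hle
    by_cases hk : (γ.support \ ({e0, e1, e2} : Finset (Fin n))).card ≤ k
    · exact ih γ hγ hk
    push_neg at hk
    -- pick y in supp \ X0 and x in X0 \ supp
    have hy : ∃ y, y ∈ γ.support \ ({e0, e1, e2} : Finset (Fin n)) :=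
      Finset.card_pos.mp (by omega)
    obtain ⟨y, hymem⟩ := hy
    have hX0card : ({e0, e1, e2} : Finset (Fin n)).card = 3 := card_triple h01 h02 h12
    have hinter : (γ.support ∩ ({e0, e1, e2} : Finset (Fin n))).card ≤ 2 := by
      have h1 := Finset.card_sdiff_add_card_inter γ.support ({e0, e1, e2} : Finset (Fin n))
      omega
    have hx : ∃ x, x ∈ ({e0, e1, e2} : Finset (Fin n)) \ γ.support := by
      apply Finset.card_pos.mp
      have h2 := Finset.card_sdiff_add_card_inter ({e0, e1, e2} : Finset (Fin n)) γ.support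
      rw [Finset.inter_comm] at h2
      omega
    obtain ⟨x, hxmem⟩ := hx
    rw [Finset.mem_sdiff] at hymem hxmem
    -- the intermediate 3-set
    have hyne : ∀ z ∈ γ.support.erase y, z ≠ x → True := fun _ _ _ => trivial
    have hxnotin : x ∉ γ.support.erase y := fun hc => hxmem.2 (Finset.mem_of_mem_erase hc)
    have hZcard : (insert x (γ.support.erase y)).card = 3 := by
      rw [Finset.card_insert_of_notMem hxnotin, Finset.card_erase_of_mem hymem.1, hγ]
    obtain ⟨p, q, r, hpq, hpr, hqr, hZ⟩ := Finset.card_eq_three.mp hZcard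
    have hγZsupp : (c3 p q r).support = insert x (γ.support.erase y) := by
      rw [c3_support hpq hpr hqr, hZ]
    have hγZcard : (c3 p q r).support.card = 3 := c3_support_card hpq hpr hqr
    -- the intermediate cycle is fixed by induction
    have hZfix : h (c3 p q r) = c3 p q r := by
      apply ih _ hγZcard
      rw [hγZsupp]
      have hsub : insert x (γ.support.erase y) \ ({e0, e1, e2} : Finset (Fin n)) ⊆
          (γ.support \ ({e0, e1, e2} : Finset (Fin n))).erase y := by
        intro i hi
        rw [Finset.mem_sdiff, Finset.mem_insert] at hi
        rcases hi.1 with rfl | hi'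
        · exact absurd hxmem.1 hi.2
        · rw [Finset.mem_erase]
          exact ⟨Finset.ne_of_mem_erase hi', Finset.mem_sdiff.mpr
            ⟨Finset.mem_of_mem_erase hi', hi.2⟩⟩
      have h3 := Finset.card_le_card hsub
      have h4 := Finset.card_erase_of_mem (Finset.mem_sdiff.mpr hymem)
      omega
    -- share exactly two points
    have hshare : ((c3 p q r).support ∩ γ.support).card = 2 := by
      have : (c3 p q r).support ∩ γ.support = γ.support.erase y := by
        rw [hγZsupp]
        ext i
        rw [Finset.mem_inter, Finset.mem_insert]
        constructor
        · rintro ⟨rfl | hi, hi2⟩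
          · exact absurd hi2 hxmem.2
          · exact hi
        · intro hi
          exact ⟨Or.inr hi, Finset.mem_of_mem_erase hi⟩
      rw [this, Finset.card_erase_of_mem hymem.1, hγ]
    exact prop2 hhd hh1 hhsw hγZcard hγ hZfix hshare

lemma h_eq_id {e0 e1 e2 : Fin n} (h01 : e0 ≠ e1) (h02 : e0 ≠ e2) (h12 : e1 ≠ e2)
    (hbase : h (c3 e0 e1 e2) = c3 e0 e1 e2) : ∀ φ, h φ = φ := by
  intro φ
  refine recon (h_dist_one hhd hh1 φ) (fun a b hab => h_dist_swap hhd hhsw φ hab) ?_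
  intro a b c hab hac hbc
  have hfix := allfix hhd hh1 hhsw h01 h02 h12 hbase (c3 a b c) (c3_support_card hab hac hbc)
  conv_lhs => rw [← hfix]
  rw [hhd]

end H

/-! ### Main classification -/

theorem part1 (hn : 3 ≤ n) (f : Perm (Fin n) → Perm (Fin n)) (hfb : Function.Bijective f)
    (hfd : ∀ φ ψ, permDist (f φ) (f ψ) = permDist φ ψ) :
    ∃ σ τ : Perm (Fin n), (∀ φ, f φ = σ * φ * τ) ∨ (∀ φ, f φ = σ * φ⁻¹ * τ) := by
  set g : Perm (Fin n) → Perm (Fin n) := fun φ => (f 1)⁻¹ * f φ with hgdef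
  have hgd : ∀ φ ψ, permDist (g φ) (g ψ) = permDist φ ψ := by
    intro φ ψ
    show permDist ((f 1)⁻¹ * f φ) ((f 1)⁻¹ * f ψ) = _
    rw [permDist_left, hfd]
  have hg1 : g 1 = 1 := by
    show (f 1)⁻¹ * f 1 = 1
    group
  have hgb : Function.Bijective g := by
    constructor
    · exact g_inj hgd
    · intro y
      obtain ⟨x, hx⟩ := hfb.2 (f 1 * y)
      refine ⟨x, ?_⟩
      show (f 1)⁻¹ * f x = y
      rw [hx]
      group
  obtain ⟨σ, hσ⟩ := exists_sigma hgd hg1 hgb hn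
  set h : Perm (Fin n) → Perm (Fin n) := fun φ => σ⁻¹ * g φ * σ with hhdef
  have hhd : ∀ φ ψ, permDist (h φ) (h ψ) = permDist φ ψ := by
    intro φ ψ
    show permDist (σ⁻¹ * g φ * σ) (σ⁻¹ * g ψ * σ) = _
    rw [permDist_right, permDist_left, hgd]
  have hh1 : h 1 = 1 := by
    show σ⁻¹ * g 1 * σ = 1
    rw [hg1]
    group
  have hhsw : ∀ a b : Fin n, a ≠ b → h (Equiv.swap a b) = Equiv.swap a b := by
    intro a b hab
    show σ⁻¹ * g (Equiv.swap a b) * σ = Equiv.swap a b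
    rw [hσ a b hab, Equiv.swap_apply_apply]
    group
  -- base points
  have h0n : 0 < n := by omega
  have h1n : 1 < n := by omega
  have h2n : 2 < n := by omega
  set e0 : Fin n := ⟨0, h0n⟩
  set e1 : Fin n := ⟨1, h1n⟩
  set e2 : Fin n := ⟨2, h2n⟩
  have h01 : e0 ≠ e1 := by simp [e0, e1, Fin.ext_iff]
  have h02 : e0 ≠ e2 := by simp [e0, e2, Fin.ext_iff]
  have h12 : e1 ≠ e2 := by simp [e1, e2, Fin.ext_iff]
  have hγ0card : (c3 e0 e1 e2).support.card = 3 := c3_support_card h01 h02 h12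
  have hfφ : ∀ φ, f φ = f 1 * (σ * h φ * σ⁻¹) := by
    intro φ
    show f φ = f 1 * (σ * (σ⁻¹ * ((f 1)⁻¹ * f φ) * σ) * σ⁻¹)
    group
  rcases h_cycle hhd hh1 hhsw hγ0card with hbase | hbase
  · -- h = id
    have hid := h_eq_id hhd hh1 hhsw h01 h02 h12 hbase
    refine ⟨f 1 * σ, σ⁻¹, Or.inl ?_⟩
    intro φ
    rw [hfφ φ, hid φ]
    group
  · -- inversion case
    set h' : Perm (Fin n) → Perm (Fin n) := fun φ => (h φ)⁻¹ with hh'def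
    have hhd' : ∀ φ ψ, permDist (h' φ) (h' ψ) = permDist φ ψ := by
      intro φ ψ
      show permDist (h φ)⁻¹ (h ψ)⁻¹ = _
      rw [permDist_inv, hhd]
    have hh1' : h' 1 = 1 := by
      show (h 1)⁻¹ = 1
      rw [hh1]
      group
    have hhsw' : ∀ a b : Fin n, a ≠ b → h' (Equiv.swap a b) = Equiv.swap a b := by
      intro a b hab
      show (h (Equiv.swap a b))⁻¹ = Equiv.swap a b
      rw [hhsw a b hab]
      exact Equiv.swap_inv a b
    have hbase' : h' (c3 e0 e1 e2) = c3 e0 e1 e2 := by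
      show (h (c3 e0 e1 e2))⁻¹ = c3 e0 e1 e2
      rw [hbase]
      group
    have hid := h_eq_id hhd' hh1' hhsw' h01 h02 h12 hbase'
    refine ⟨f 1 * σ, σ⁻¹, Or.inr ?_⟩
    intro φ
    have hφinv : h φ = φ⁻¹ := by
      have h2 : (h φ)⁻¹ = φ := hid φ
      have h3 := congrArg Inv.inv h2
      rwa [inv_inv] at h3
    rw [hfφ φ, hφinv]
    group

/-! ### Counting the isometry group -/

lemma central_eq_one (hn : 3 ≤ n) {z : Perm (Fin n)} (hz : ∀ φ, z * φ = φ * z) : z = 1 := by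
  apply Equiv.ext
  intro a
  by_contra hza
  have hza' : z a ≠ a := hza
  obtain ⟨c, hc⟩ : ∃ c : Fin n, c ∉ ({a, z a} : Finset (Fin n)) := by
    by_contra hcon
    push_neg at hcon
    have hsub : (univ : Finset (Fin n)) ⊆ {a, z a} := fun x _ => hcon x
    have hle := Finset.card_le_card hsub
    rw [Finset.card_univ, Fintype.card_fin, card_pair' (Ne.symm hza')] at hle
    omega
  simp only [mem_insert, mem_singleton, not_or] at hc
  have := DFunLike.congr_fun (hz (Equiv.swap a c)) a
  rw [Perm.mul_apply, Perm.mul_apply, Equiv.swap_apply_left,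
    Equiv.swap_apply_of_ne_of_ne hza' (fun h => hc.2 h.symm)] at this
  exact hc.1 (z.injective this)

lemma exists_noncomm (hn : 3 ≤ n) :
    ∃ α β : Perm (Fin n), α * β ≠ β * α := by
  have h0n : 0 < n := by omega
  have h1n : 1 < n := by omega
  have h2n : 2 < n := by omega
  set e0 : Fin n := ⟨0, h0n⟩
  set e1 : Fin n := ⟨1, h1n⟩
  set e2 : Fin n := ⟨2, h2n⟩
  have h01 : e0 ≠ e1 := by simp [e0, e1, Fin.ext_iff]
  have h02 : e0 ≠ e2 := by simp [e0, e2, Fin.ext_iff]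
  have h12 : e1 ≠ e2 := by simp [e1, e2, Fin.ext_iff]
  refine ⟨Equiv.swap e0 e1, Equiv.swap e1 e2, ?_⟩
  intro h
  have := DFunLike.congr_fun h e0
  rw [Perm.mul_apply, Perm.mul_apply, Equiv.swap_apply_of_ne_of_ne h01 h02,
    Equiv.swap_apply_left, Equiv.swap_apply_left] at this
  exact h12 this

lemma inj_pair (hn : 3 ≤ n) {σ τ σ' τ' : Perm (Fin n)}
    (hfun : ∀ φ : Perm (Fin n), σ * φ * τ = σ' * φ * τ') : σ = σ' ∧ τ = τ' := by
  have h1 : σ * τ = σ' * τ' := by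
    have := hfun 1
    rwa [mul_one, mul_one] at this
  have hτ' : τ' = σ'⁻¹ * σ * τ := by
    calc τ' = σ'⁻¹ * (σ' * τ') := by group
    _ = σ'⁻¹ * (σ * τ) := by rw [h1]
    _ = σ'⁻¹ * σ * τ := (mul_assoc _ _ _).symm
  have hz : ∀ φ, (σ'⁻¹ * σ) * φ = φ * (σ'⁻¹ * σ) := by
    intro φ
    have h2 := hfun φ
    rw [hτ'] at h2
    have h4 : σ * φ * τ = (σ' * (φ * (σ'⁻¹ * σ))) * τ := by rw [h2]; group
    have h5 := mul_right_cancel h4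
    calc (σ'⁻¹ * σ) * φ = σ'⁻¹ * (σ * φ) := by group
    _ = σ'⁻¹ * (σ' * (φ * (σ'⁻¹ * σ))) := by rw [← h5]
    _ = φ * (σ'⁻¹ * σ) := by group
  have hone : σ'⁻¹ * σ = 1 := central_eq_one hn hz
  have hσ : σ = σ' := (inv_mul_eq_one.mp hone).symm
  refine ⟨hσ, ?_⟩
  rw [hσ] at h1
  exact mul_left_cancel h1

lemma cross_impossible (hn : 3 ≤ n) {σ τ σ' τ' : Perm (Fin n)}
    (hfun : ∀ φ : Perm (Fin n), σ * φ * τ = σ' * φ⁻¹ * τ') : False := by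
  have h1 : σ * τ = σ' * τ' := by
    have := hfun 1
    rwa [inv_one, mul_one, mul_one] at this
  have hτ' : τ' = σ'⁻¹ * σ * τ := by
    calc τ' = σ'⁻¹ * (σ' * τ') := by group
    _ = σ'⁻¹ * (σ * τ) := by rw [h1]
    _ = σ'⁻¹ * σ * τ := (mul_assoc _ _ _).symm
  have hz : ∀ φ : Perm (Fin n), (σ'⁻¹ * σ) * φ = φ⁻¹ * (σ'⁻¹ * σ) := by
    intro φ
    have h2 := hfun φ
    rw [hτ'] at h2
    have h4 : σ * φ * τ = (σ' * (φ⁻¹ * (σ'⁻¹ * σ))) * τ := by rw [h2]; group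
    have h5 := mul_right_cancel h4
    calc (σ'⁻¹ * σ) * φ = σ'⁻¹ * (σ * φ) := by group
    _ = σ'⁻¹ * (σ' * (φ⁻¹ * (σ'⁻¹ * σ))) := by rw [← h5]
    _ = φ⁻¹ * (σ'⁻¹ * σ) := by group
  obtain ⟨α, β, hαβ⟩ := exists_noncomm hn
  apply hαβ
  have key : ∀ φ ψ : Perm (Fin n), ψ⁻¹ * φ⁻¹ = φ⁻¹ * ψ⁻¹ := by
    intro φ ψ
    have e1 : (σ'⁻¹ * σ) * (φ * ψ) = (ψ⁻¹ * φ⁻¹) * (σ'⁻¹ * σ) := by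
      rw [hz (φ * ψ)]
      group
    have e2 : (σ'⁻¹ * σ) * (φ * ψ) = (φ⁻¹ * ψ⁻¹) * (σ'⁻¹ * σ) := by
      calc (σ'⁻¹ * σ) * (φ * ψ) = ((σ'⁻¹ * σ) * φ) * ψ := by group
      _ = (φ⁻¹ * ((σ'⁻¹ * σ) * ψ)) := by rw [hz φ]; group
      _ = φ⁻¹ * (ψ⁻¹ * (σ'⁻¹ * σ)) := by rw [hz ψ]
      _ = (φ⁻¹ * ψ⁻¹) * (σ'⁻¹ * σ) := by group
    have := mul_right_cancel (e1.symm.trans e2)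
    exact this
  have h7 := key α⁻¹ β⁻¹
  rw [inv_inv, inv_inv] at h7
  exact h7.symm

lemma part2 (hn : 3 ≤ n) :
    Nat.card {f : Equiv.Perm (Fin n) ≃ Equiv.Perm (Fin n) //
        ∀ φ ψ, permDist (f φ) (f ψ) = permDist φ ψ} = 2 * (Nat.factorial n) ^ 2 := by
  set S := {f : Equiv.Perm (Fin n) ≃ Equiv.Perm (Fin n) //
      ∀ φ ψ, permDist (f φ) (f ψ) = permDist φ ψ} with hS
  -- the parametrization
  have hmk1 : ∀ σ τ : Perm (Fin n), ∀ φ ψ : Perm (Fin n),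
      permDist (σ * φ * τ) (σ * ψ * τ) = permDist φ ψ := by
    intro σ τ φ ψ
    rw [permDist_right, permDist_left]
  have hmk2 : ∀ σ τ : Perm (Fin n), ∀ φ ψ : Perm (Fin n),
      permDist (σ * φ⁻¹ * τ) (σ * ψ⁻¹ * τ) = permDist φ ψ := by
    intro σ τ φ ψ
    rw [permDist_right, permDist_left, permDist_inv]
  set F : Bool × Perm (Fin n) × Perm (Fin n) → S := fun x =>
    if hb : x.1 = true then
      ⟨((Equiv.inv (Perm (Fin n))).trans (Equiv.mulLeft x.2.1)).trans
          (Equiv.mulRight x.2.2), by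
        intro φ ψ
        simp only [Equiv.trans_apply, Equiv.inv_apply, Equiv.coe_mulLeft,
          Equiv.coe_mulRight]
        exact hmk2 x.2.1 x.2.2 φ ψ⟩
    else
      ⟨(Equiv.mulLeft x.2.1).trans (Equiv.mulRight x.2.2), by
        intro φ ψ
        simp only [Equiv.trans_apply, Equiv.coe_mulLeft, Equiv.coe_mulRight]
        exact hmk1 x.2.1 x.2.2 φ ψ⟩
  have hFapp_false : ∀ (σ τ : Perm (Fin n)) (φ : Perm (Fin n)),
      (F (false, σ, τ)).1 φ = σ * φ * τ := fun σ τ φ => rfl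
  have hFapp_true : ∀ (σ τ : Perm (Fin n)) (φ : Perm (Fin n)),
      (F (true, σ, τ)).1 φ = σ * φ⁻¹ * τ := fun σ τ φ => rfl
  have hFbij : Function.Bijective F := by
    constructor
    · rintro ⟨b1, σ1, τ1⟩ ⟨b2, σ2, τ2⟩ heq
      have happ : ∀ φ, (F (b1, σ1, τ1)).1 φ = (F (b2, σ2, τ2)).1 φ := by
        intro φ
        rw [heq]
      rcases b1 <;> rcases b2
      · have hfun : ∀ φ, σ1 * φ * τ1 = σ2 * φ * τ2 := by
          intro φ
          rw [← hFapp_false σ1 τ1 φ, ← hFapp_false σ2 τ2 φ]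
          exact happ φ
        obtain ⟨hA, hB⟩ := inj_pair hn hfun
        rw [hA, hB]
      · exfalso
        refine cross_impossible hn (σ := σ1) (τ := τ1) (σ' := σ2) (τ' := τ2) ?_
        intro φ
        rw [← hFapp_false σ1 τ1 φ, ← hFapp_true σ2 τ2 φ]
        exact happ φ
      · exfalso
        refine cross_impossible hn (σ := σ2) (τ := τ2) (σ' := σ1) (τ' := τ1) ?_
        intro φ
        rw [← hFapp_false σ2 τ2 φ, ← hFapp_true σ1 τ1 φ]
        exact (happ φ).symm
      · have hfun : ∀ φ, σ1 * φ * τ1 = σ2 * φ * τ2 := by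
          intro φ
          have h9 : (F (true, σ1, τ1)).1 φ⁻¹ = (F (true, σ2, τ2)).1 φ⁻¹ := happ φ⁻¹
          rw [hFapp_true, hFapp_true, inv_inv] at h9
          exact h9
        obtain ⟨hA, hB⟩ := inj_pair hn hfun
        rw [hA, hB]
    · rintro ⟨f, hf⟩
      obtain ⟨σ, τ, hστ⟩ := part1 hn f f.bijective hf
      rcases hστ with hfun | hfun
      · refine ⟨(false, σ, τ), ?_⟩
        apply Subtype.ext
        apply Equiv.ext
        intro φ
        rw [hFapp_false, ← hfun φ]
      · refine ⟨(true, σ, τ), ?_⟩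
        apply Subtype.ext
        apply Equiv.ext
        intro φ
        rw [hFapp_true, ← hfun φ]
  have hcount := Nat.card_eq_of_bijective F hFbij
  rw [← hcount, Nat.card_prod, Nat.card_prod]
  simp only [Nat.card_eq_fintype_card, Fintype.card_bool, Fintype.card_perm, Fintype.card_fin]
  ring

end IsoProof

/-- For `n ≥ 3`, every bijection of `Sym(n)` preserving Hamming distance
has the form `φ ↦ σφτ` or `φ ↦ σφ⁻¹τ`; consequently the group of Hamming
isometries of `Sym(n)` has order `2·(n!)²`. -/
theorem isometries_of_symmetric_group (n : ℕ) (hn : 3 ≤ n) :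
    (∀ f : Equiv.Perm (Fin n) → Equiv.Perm (Fin n), Function.Bijective f →
      (∀ φ ψ, permDist (f φ) (f ψ) = permDist φ ψ) →
      ∃ σ τ : Equiv.Perm (Fin n),
        (∀ φ, f φ = σ * φ * τ) ∨ (∀ φ, f φ = σ * φ⁻¹ * τ)) ∧
    Nat.card {f : Equiv.Perm (Fin n) ≃ Equiv.Perm (Fin n) //
        ∀ φ ψ, permDist (f φ) (f ψ) = permDist φ ψ} = 2 * (Nat.factorial n) ^ 2 := by
  constructor
  · intro f hfb hfd
    exact IsoProof.part1 hn f hfb hfd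
  · exact IsoProof.part2 hn
end

section
/- Let Γ be a nonempty subset of Sym(n) and let R_Γ be the matrix indexed by Sym(n) × Sym(n) with entries R_Γ(φ,ψ) = (1/|Π|) · |{t ∈ Π : φ ∈ t(Γ) and ψ ∈ t(Γ)}|. Then R_Γ is a real symmetric positive semidefinite matrix, its trace equals |Γ|, and its (id,id)-entry equals 1. -/
set_option maxHeartbeats 1000000


/-- The isometry of `Sym(n)` associated to a triple `(σ,τ,ε)`:
`φ ↦ σφτ` when `ε = false` and `φ ↦ σφ⁻¹τ` when `ε = true`. -/
def isoAct {n : ℕ} (t : Equiv.Perm (Fin n) × Equiv.Perm (Fin n) × Bool)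
    (φ : Equiv.Perm (Fin n)) : Equiv.Perm (Fin n) :=
  if t.2.2 = false then t.1 * φ * t.2.1 else t.1 * φ⁻¹ * t.2.1

/-- The set `Π` of isometries `t` with `id ∈ t(Γ)`. -/
def PiSet {n : ℕ} (Γ : Set (Equiv.Perm (Fin n))) :
    Set (Equiv.Perm (Fin n) × Equiv.Perm (Fin n) × Bool) :=
  {t | ∃ φ ∈ Γ, isoAct t φ = 1}

/-- The matrix `R_Γ`, with `(φ,ψ)`-entry
`(1/|Π|)·|{t ∈ Π : φ ∈ t(Γ) and ψ ∈ t(Γ)}|`. -/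
noncomputable def Rmat {n : ℕ} (Γ : Set (Equiv.Perm (Fin n))) :
    Matrix (Equiv.Perm (Fin n)) (Equiv.Perm (Fin n)) ℝ :=
  fun φ ψ =>
    ({t | t ∈ PiSet Γ ∧ (∃ θ ∈ Γ, isoAct t θ = φ) ∧ (∃ θ ∈ Γ, isoAct t θ = ψ)}.ncard : ℝ) /
      ((PiSet Γ).ncard : ℝ)

lemma isoAct_inj {n : ℕ} (t : Equiv.Perm (Fin n) × Equiv.Perm (Fin n) × Bool) :
    Function.Injective (isoAct t) := by
  intro a b h
  unfold isoAct at h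
  split_ifs at h
  · exact mul_left_cancel (mul_right_cancel h)
  · exact inv_injective (mul_left_cancel (mul_right_cancel h))

lemma ncard_eq_sum {α : Type*} [Fintype α] (P : α → Prop) [DecidablePred P] :
    (({t | P t}).ncard : ℝ) = ∑ t : α, if P t then (1 : ℝ) else 0 := by
  rw [Set.ncard_eq_toFinset_card' {t | P t}, Set.toFinset_setOf, Finset.card_filter]
  push_cast
  simp

/-- For a nonempty `Γ ⊆ Sym(n)`, the matrix `R_Γ` is a real symmetric positive
semidefinite matrix, its trace equals `|Γ|`, and its `(id,id)` entry is `1`. -/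
theorem Rmat_symm_posSemidef_trace_diag (n : ℕ)
    (Γ : Set (Equiv.Perm (Fin n))) (hΓ : Γ.Nonempty) :
    (Rmat Γ).IsSymm ∧ (Rmat Γ).PosSemidef ∧
      (Rmat Γ).trace = (Γ.ncard : ℝ) ∧ Rmat Γ 1 1 = 1 := by
  classical
  obtain ⟨φ₀, hφ₀⟩ := hΓ
  have hPine : (PiSet Γ).Nonempty := ⟨(φ₀⁻¹, 1, false), ⟨φ₀, hφ₀, by simp [isoAct]⟩⟩
  have hc0 : 0 < ((PiSet Γ).ncard : ℝ) := by
    exact_mod_cast (Set.ncard_pos (Set.toFinite _)).mpr hPine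
  have hc : ((PiSet Γ).ncard : ℝ) ≠ 0 := ne_of_gt hc0
  set g : (Equiv.Perm (Fin n) × Equiv.Perm (Fin n) × Bool) → Equiv.Perm (Fin n) → ℝ :=
    fun t φ => if t ∈ PiSet Γ ∧ ∃ θ ∈ Γ, isoAct t θ = φ then 1 else 0 with hg
  have hkey : ∀ φ ψ, Rmat Γ φ ψ = (∑ t, g t φ * g t ψ) / ((PiSet Γ).ncard : ℝ) := by
    intro φ ψ
    unfold Rmat
    congr 1
    rw [ncard_eq_sum]
    refine Finset.sum_congr rfl fun t _ => ?_
    simp only [hg]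
    by_cases hP : t ∈ PiSet Γ <;> by_cases hA : ∃ θ ∈ Γ, isoAct t θ = φ <;>
      by_cases hB : ∃ θ ∈ Γ, isoAct t θ = ψ <;> simp [hP, hA, hB]
  -- positive semidefiniteness
  set A : Matrix (Equiv.Perm (Fin n) × Equiv.Perm (Fin n) × Bool) (Equiv.Perm (Fin n)) ℝ :=
    Matrix.of g with hA
  have hRA : Rmat Γ = (((PiSet Γ).ncard : ℝ)⁻¹) • (A.conjTranspose * A) := by
    ext φ ψ
    rw [hkey]
    simp only [Matrix.smul_apply, Matrix.mul_apply, Matrix.conjTranspose_apply, hA,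
      Matrix.of_apply, star_trivial, smul_eq_mul]
    rw [div_eq_inv_mul]
  have hpsd : (Rmat Γ).PosSemidef := by
    rw [hRA]
    have h0 : (0 : ℝ) ≤ ((PiSet Γ).ncard : ℝ)⁻¹ := by positivity
    obtain ⟨h1, h2⟩ := Matrix.posSemidef_conjTranspose_mul_self A
    refine ⟨?_, fun x => ?_⟩
    · unfold Matrix.IsHermitian at h1 ⊢
      rw [Matrix.conjTranspose_smul, h1, star_trivial]
    · have h3 := mul_nonneg h0 (h2 x)
      simp only [Finsupp.sum, Finset.mul_sum, Matrix.smul_apply, smul_eq_mul] at h3 ⊢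
      exact le_of_le_of_eq h3
        (Finset.sum_congr rfl fun i _ => Finset.sum_congr rfl fun j _ => by ring)
  -- symmetry
  have hsymm : (Rmat Γ).IsSymm := by
    refine Matrix.IsSymm.ext fun i j => ?_
    rw [hkey, hkey]
    congr 1
    exact Finset.sum_congr rfl fun t _ => mul_comm _ _
  -- trace
  have htrace : (Rmat Γ).trace = (Γ.ncard : ℝ) := by
    have hgg : ∀ t φ, g t φ * g t φ = g t φ := by
      intro t φ; simp only [hg]; split_ifs <;> norm_num
    have hrow : ∀ t, (∑ φ, g t φ) = if t ∈ PiSet Γ then (Γ.ncard : ℝ) else 0 := by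
      intro t
      by_cases ht : t ∈ PiSet Γ
      · rw [if_pos ht]
        have h1 : ∀ φ, g t φ = if ∃ θ ∈ Γ, isoAct t θ = φ then (1 : ℝ) else 0 := by
          intro φ; simp [hg, ht]
        simp_rw [h1]
        have e1 : ((isoAct t '' Γ).ncard : ℝ)
            = ∑ x, if ∃ θ ∈ Γ, isoAct t θ = x then (1 : ℝ) else 0 := ncard_eq_sum _
        rw [← e1, Set.ncard_image_of_injective Γ (isoAct_inj t)]
      · rw [if_neg ht]
        simp [hg, ht]
    have hstep : ∀ t, (if t ∈ PiSet Γ then (Γ.ncard : ℝ) else 0)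
        = (if t ∈ PiSet Γ then (1 : ℝ) else 0) * (Γ.ncard : ℝ) := by
      intro t; split_ifs <;> ring
    simp only [Matrix.trace, Matrix.diag_apply, hkey, hgg]
    rw [← Finset.sum_div, Finset.sum_comm]
    simp_rw [hrow, hstep]
    have e2 : (((PiSet Γ)).ncard : ℝ)
        = ∑ t, if t ∈ PiSet Γ then (1 : ℝ) else 0 :=
      @ncard_eq_sum _ _ (fun t => t ∈ PiSet Γ) (fun t => Classical.propDecidable _)
    rw [← Finset.sum_mul, ← e2, mul_comm, mul_div_assoc, div_self hc, mul_one]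
  -- diagonal entry at identity
  have hdiag : Rmat Γ 1 1 = 1 := by
    unfold Rmat
    have hset : {t | t ∈ PiSet Γ ∧ (∃ θ ∈ Γ, isoAct t θ = 1) ∧ (∃ θ ∈ Γ, isoAct t θ = 1)}
        = PiSet Γ := by
      ext t
      simp only [Set.mem_setOf_eq, PiSet]
      tauto
    rw [hset, div_self hc]
  exact ⟨hsymm, hpsd, htrace, hdiag⟩
end

section
/- Let Γ be a nonempty proper subset of Sym(n) and let φ, ψ ∈ Sym(n). If no quotient of two elements of Γ is conjugate to φψ⁻¹ (i.e., for all θ, μ ∈ Γ, the permutation θμ⁻¹ is not conjugate to φψ⁻¹ in Sym(n)), then R_Γ(φ,ψ) = 0 and R'_Γ(φ,ψ) = 0. -/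
/-- The matrix `R'_Γ`, with `(φ,ψ)`-entry
`(1/|Π'|)·|{t ∈ Π' : φ ∈ t(Γ) and ψ ∈ t(Γ)}|`, where `Π'` is the complement of `Π`. -/
noncomputable def Rmat' {n : ℕ} (Γ : Set (Equiv.Perm (Fin n))) :
    Matrix (Equiv.Perm (Fin n)) (Equiv.Perm (Fin n)) ℝ :=
  fun φ ψ =>
    ({t | t ∈ (PiSet Γ)ᶜ ∧ (∃ θ ∈ Γ, isoAct t θ = φ) ∧ (∃ θ ∈ Γ, isoAct t θ = ψ)}.ncard : ℝ) /
      (((PiSet Γ)ᶜ : Set _).ncard : ℝ)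

/-- If no quotient of two elements of `Γ` is conjugate to `φψ⁻¹`, then the
`(φ,ψ)`-entries of both `R_Γ` and `R'_Γ` vanish. -/
theorem Rmat_entry_eq_zero_of_no_conj_quotient (n : ℕ)
    (Γ : Set (Equiv.Perm (Fin n))) (hΓ : Γ.Nonempty) (hΓ' : Γ ≠ Set.univ)
    (φ ψ : Equiv.Perm (Fin n))
    (h : ∀ θ ∈ Γ, ∀ μ ∈ Γ, ¬ IsConj (θ * μ⁻¹) (φ * ψ⁻¹)) :
    Rmat Γ φ ψ = 0 ∧ Rmat' Γ φ ψ = 0 := by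
  have key : ∀ t : Equiv.Perm (Fin n) × Equiv.Perm (Fin n) × Bool,
      ¬ ((∃ θ ∈ Γ, isoAct t θ = φ) ∧ (∃ θ ∈ Γ, isoAct t θ = ψ)) := by
    rintro ⟨σ, τ, ε⟩ ⟨⟨θ, hθ, h1⟩, ⟨μ, hμ, h2⟩⟩
    cases ε with
    | false =>
      simp only [isoAct, reduceIte] at h1 h2
      apply h θ hθ μ hμ
      rw [isConj_iff]
      refine ⟨σ, ?_⟩
      rw [← h1, ← h2]
      group
    | true =>
      simp only [isoAct, Bool.true_eq_false, if_false] at h1 h2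
      apply h μ hμ θ hθ
      have hc : IsConj (μ * θ⁻¹) (θ⁻¹ * μ) := by
        rw [isConj_iff]; exact ⟨θ⁻¹, by group⟩
      refine hc.trans ?_
      rw [isConj_iff]
      refine ⟨σ, ?_⟩
      rw [← h1, ← h2]
      group
  have e1 : {t | t ∈ PiSet Γ ∧ (∃ θ ∈ Γ, isoAct t θ = φ) ∧ (∃ θ ∈ Γ, isoAct t θ = ψ)} =
      (∅ : Set (Equiv.Perm (Fin n) × Equiv.Perm (Fin n) × Bool)) := by
    ext t; simp only [Set.mem_setOf_eq, Set.mem_empty_iff_false, iff_false]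
    exact fun ht => key t ht.2
  have e2 : {t | t ∈ (PiSet Γ)ᶜ ∧ (∃ θ ∈ Γ, isoAct t θ = φ) ∧ (∃ θ ∈ Γ, isoAct t θ = ψ)} =
      (∅ : Set (Equiv.Perm (Fin n) × Equiv.Perm (Fin n) × Bool)) := by
    ext t; simp only [Set.mem_setOf_eq, Set.mem_empty_iff_false, iff_false]
    exact fun ht => key t ht.2
  constructor
  · unfold Rmat; rw [e1]; simp
  · unfold Rmat'; rw [e2]; simp
end

section
/- Let Γ be a nonempty proper subset of Sym(n). Then for all φ, ψ ∈ Sym(n): R_Γ(φ,ψ) + ((n! − |Γ|)/|Γ|) · R'_Γ(φ,ψ) = R_Γ(id, φψ⁻¹). In particular, the matrix R_Γ + ((n! − |Γ|)/|Γ|)·R'_Γ has all diagonal entries equal to 1. -/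
section Aux

variable {n : ℕ}

lemma mem_piSet_iff (Γ : Set (Equiv.Perm (Fin n))) (σ τ : Equiv.Perm (Fin n)) (ε : Bool) :
    (σ, τ, ε) ∈ PiSet Γ ↔ (if ε = false then (τ * σ)⁻¹ else τ * σ) ∈ Γ := by
  cases ε
  · simp only [PiSet, isoAct, Set.mem_setOf_eq, reduceIte]
    constructor
    · rintro ⟨θ, hθ, h⟩
      have h2 : θ = σ⁻¹ * (σ * θ * τ) * τ⁻¹ := by group
      rw [h] at h2
      have h3 : θ = (τ * σ)⁻¹ := by rw [h2]; group
      rwa [← h3]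
    · intro h
      exact ⟨(τ * σ)⁻¹, h, by group⟩
  · simp only [PiSet, isoAct, Set.mem_setOf_eq, Bool.true_eq_false, if_false]
    constructor
    · rintro ⟨θ, hθ, h⟩
      have h2 : θ⁻¹ = σ⁻¹ * (σ * θ⁻¹ * τ) * τ⁻¹ := by group
      rw [h] at h2
      have h3 : θ = τ * σ := inv_injective (by rw [h2]; group)
      rwa [← h3]
    · intro h
      exact ⟨τ * σ, h, by group⟩

/-- An auxiliary permutation of the set of triples used to count `Π`. -/
def keyEquiv (n : ℕ) : (Equiv.Perm (Fin n) × Equiv.Perm (Fin n) × Bool) ≃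
    (Equiv.Perm (Fin n) × Equiv.Perm (Fin n) × Bool) where
  toFun t := ((if t.2.2 = false then (t.2.1 * t.1)⁻¹ else t.2.1 * t.1), t.1, t.2.2)
  invFun t := (t.2.1, (if t.2.2 = false then t.1⁻¹ else t.1) * t.2.1⁻¹, t.2.2)
  left_inv := by rintro ⟨σ, τ, ε⟩; cases ε <;> simp [mul_assoc]
  right_inv := by rintro ⟨v, σ, ε⟩; cases ε <;> simp [mul_assoc]

lemma ncard_prod_aux {α β : Type*} (s : Set α) (t : Set β) :
    (s ×ˢ t).ncard = s.ncard * t.ncard := by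
  rw [← Nat.card_coe_set_eq, ← Nat.card_coe_set_eq, ← Nat.card_coe_set_eq,
    Nat.card_congr (Equiv.Set.prod s t), Nat.card_prod]

lemma piSet_eq (Γ : Set (Equiv.Perm (Fin n))) :
    PiSet Γ = (keyEquiv n) ⁻¹' (Γ ×ˢ (Set.univ : Set (Equiv.Perm (Fin n) × Bool))) := by
  ext ⟨σ, τ, ε⟩
  rw [mem_piSet_iff]
  simp [keyEquiv]

lemma ncard_piSet (Γ : Set (Equiv.Perm (Fin n))) :
    (PiSet Γ).ncard = Γ.ncard * (n.factorial * 2) := by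
  rw [piSet_eq, ← Equiv.image_symm_eq_preimage,
    Set.ncard_image_of_injective _ (keyEquiv n).symm.injective, ncard_prod_aux,
    Set.ncard_univ, Nat.card_eq_fintype_card, Fintype.card_prod, Fintype.card_perm,
    Fintype.card_fin, Fintype.card_bool]

/-- The translation `(σ,τ,ε) ↦ (σ, τψ⁻¹, ε)`. -/
def shiftEquiv' (ψ : Equiv.Perm (Fin n)) :
    (Equiv.Perm (Fin n) × Equiv.Perm (Fin n) × Bool) ≃
    (Equiv.Perm (Fin n) × Equiv.Perm (Fin n) × Bool) where
  toFun t := (t.1, t.2.1 * ψ⁻¹, t.2.2)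
  invFun t := (t.1, t.2.1 * ψ, t.2.2)
  left_inv t := by simp
  right_inv t := by simp

lemma isoAct_shiftEquiv' (ψ : Equiv.Perm (Fin n))
    (t : Equiv.Perm (Fin n) × Equiv.Perm (Fin n) × Bool) (θ : Equiv.Perm (Fin n)) :
    isoAct (shiftEquiv' ψ t) θ = isoAct t θ * ψ⁻¹ := by
  rcases t with ⟨σ, τ, ε⟩
  cases ε <;> simp [isoAct, shiftEquiv', mul_assoc]

lemma image_shiftEquiv' (Γ : Set (Equiv.Perm (Fin n))) (φ ψ : Equiv.Perm (Fin n)) :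
    shiftEquiv' ψ '' {t | (∃ θ ∈ Γ, isoAct t θ = φ) ∧ (∃ θ ∈ Γ, isoAct t θ = ψ)}
      = {t | (∃ θ ∈ Γ, isoAct t θ = 1) ∧ (∃ θ ∈ Γ, isoAct t θ = φ * ψ⁻¹)} := by
  ext t
  simp only [Set.mem_image, Set.mem_setOf_eq]
  constructor
  · rintro ⟨s, ⟨⟨θ1, h1, e1⟩, ⟨θ2, h2, e2⟩⟩, rfl⟩
    exact ⟨⟨θ2, h2, by rw [isoAct_shiftEquiv', e2]; group⟩,
      ⟨θ1, h1, by rw [isoAct_shiftEquiv', e1]⟩⟩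
  · rintro ⟨⟨θ2, h2, e2⟩, ⟨θ1, h1, e1⟩⟩
    refine ⟨(shiftEquiv' ψ).symm t, ⟨⟨θ1, h1, ?_⟩, ⟨θ2, h2, ?_⟩⟩, Equiv.apply_symm_apply _ _⟩
    · have h := isoAct_shiftEquiv' ψ ((shiftEquiv' ψ).symm t) θ1
      rw [Equiv.apply_symm_apply, e1] at h
      exact (mul_right_cancel h).symm
    · have h := isoAct_shiftEquiv' ψ ((shiftEquiv' ψ).symm t) θ2
      rw [Equiv.apply_symm_apply, e2] at h
      exact mul_inv_eq_one.mp h.symm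

lemma ncard_split {α : Type*} [Fintype α] (A : Set α) (P : α → Prop) :
    {t | t ∈ A ∧ P t}.ncard + {t | t ∈ Aᶜ ∧ P t}.ncard = {t | P t}.ncard := by
  classical
  rw [← Set.ncard_union_eq]
  · congr 1
    ext t
    by_cases h : t ∈ A <;> simp [h]
  · rw [Set.disjoint_left]
    rintro t ⟨h1, -⟩ ⟨h2, -⟩
    exact h2 h1

end Aux

/-- For a nonempty proper subset `Γ ⊆ Sym(n)`,
`R_Γ(φ,ψ) + ((n! − |Γ|)/|Γ|)·R'_Γ(φ,ψ) = R_Γ(id, φψ⁻¹)`; in particular the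
matrix `R_Γ + ((n! − |Γ|)/|Γ|)·R'_Γ` has all diagonal entries equal to `1`. -/
theorem Rmat_add_Rmat'_eq (n : ℕ)
    (Γ : Set (Equiv.Perm (Fin n))) (hΓ : Γ.Nonempty) (hΓ' : Γ ≠ Set.univ) :
    (∀ φ ψ : Equiv.Perm (Fin n),
      Rmat Γ φ ψ + ((n.factorial - Γ.ncard : ℝ) / (Γ.ncard : ℝ)) * Rmat' Γ φ ψ =
        Rmat Γ 1 (φ * ψ⁻¹)) ∧
    (∀ φ : Equiv.Perm (Fin n),
      Rmat Γ φ φ + ((n.factorial - Γ.ncard : ℝ) / (Γ.ncard : ℝ)) * Rmat' Γ φ φ = 1) := by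
  classical
  have hg0 : 0 < Γ.ncard := (Set.ncard_pos (Set.toFinite Γ)).mpr hΓ
  have hgf : Γ.ncard < n.factorial := by
    have h := Set.ncard_lt_ncard (Set.ssubset_univ_iff.mpr hΓ') Set.finite_univ
    rwa [Set.ncard_univ, Nat.card_eq_fintype_card, Fintype.card_perm, Fintype.card_fin] at h
  have hP : (PiSet Γ).ncard = Γ.ncard * (n.factorial * 2) := ncard_piSet Γ
  have hPc : ((PiSet Γ)ᶜ).ncard = (n.factorial - Γ.ncard) * (n.factorial * 2) := by
    have h := Set.ncard_add_ncard_compl (PiSet Γ)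
    rw [hP] at h
    have hcard : Nat.card (Equiv.Perm (Fin n) × Equiv.Perm (Fin n) × Bool)
        = n.factorial * (n.factorial * 2) := by
      rw [Nat.card_eq_fintype_card, Fintype.card_prod, Fintype.card_prod, Fintype.card_perm,
        Fintype.card_fin, Fintype.card_bool]
    rw [hcard] at h
    rw [Nat.sub_mul]
    omega
  -- real-number facts
  have hgR : (0:ℝ) < (Γ.ncard : ℝ) := by exact_mod_cast hg0
  have hfR : (0:ℝ) < (n.factorial : ℝ) := by exact_mod_cast n.factorial_pos
  have hfgR : (0:ℝ) < (n.factorial : ℝ) - (Γ.ncard : ℝ) := by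
    have : (Γ.ncard : ℝ) < (n.factorial : ℝ) := by exact_mod_cast hgf
    linarith
  have key : ∀ φ ψ : Equiv.Perm (Fin n),
      Rmat Γ φ ψ + ((n.factorial - Γ.ncard : ℝ) / (Γ.ncard : ℝ)) * Rmat' Γ φ ψ =
        Rmat Γ 1 (φ * ψ⁻¹) := by
    intro φ ψ
    have hsplit : {t | t ∈ PiSet Γ ∧ (∃ θ ∈ Γ, isoAct t θ = φ) ∧ (∃ θ ∈ Γ, isoAct t θ = ψ)}.ncard
        + {t | t ∈ (PiSet Γ)ᶜ ∧ (∃ θ ∈ Γ, isoAct t θ = φ) ∧ (∃ θ ∈ Γ, isoAct t θ = ψ)}.ncard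
        = {t | (∃ θ ∈ Γ, isoAct t θ = φ) ∧ (∃ θ ∈ Γ, isoAct t θ = ψ)}.ncard :=
      ncard_split (PiSet Γ) (fun t => (∃ θ ∈ Γ, isoAct t θ = φ) ∧ (∃ θ ∈ Γ, isoAct t θ = ψ))
    have hrhsset : {t | t ∈ PiSet Γ ∧ (∃ θ ∈ Γ, isoAct t θ = 1) ∧
          (∃ θ ∈ Γ, isoAct t θ = φ * ψ⁻¹)}
        = {t | (∃ θ ∈ Γ, isoAct t θ = 1) ∧ (∃ θ ∈ Γ, isoAct t θ = φ * ψ⁻¹)} := by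
      ext t
      simp only [Set.mem_setOf_eq, PiSet]
      tauto
    have himg : {t | (∃ θ ∈ Γ, isoAct t θ = 1) ∧ (∃ θ ∈ Γ, isoAct t θ = φ * ψ⁻¹)}.ncard
        = {t | (∃ θ ∈ Γ, isoAct t θ = φ) ∧ (∃ θ ∈ Γ, isoAct t θ = ψ)}.ncard := by
      rw [← image_shiftEquiv' Γ φ ψ,
        Set.ncard_image_of_injective _ (shiftEquiv' ψ).injective]
    simp only [Rmat, Rmat']
    rw [hrhsset, himg, hP, hPc, ← hsplit]
    have e2 : (((n.factorial - Γ.ncard) * (n.factorial * 2) : ℕ) : ℝ)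
        = ((n.factorial : ℝ) - Γ.ncard) * ((n.factorial : ℝ) * 2) := by
      push_cast [Nat.cast_sub hgf.le]; ring
    rw [e2]
    have hg' : (Γ.ncard : ℝ) ≠ 0 := ne_of_gt hgR
    have hfg' : ((n.factorial : ℝ) - (Γ.ncard : ℝ)) ≠ 0 := ne_of_gt hfgR
    have hf' : (n.factorial : ℝ) ≠ 0 := ne_of_gt hfR
    push_cast
    field_simp
  refine ⟨key, fun φ => ?_⟩
  rw [key φ φ, mul_inv_cancel]
  simp only [Rmat]
  have hset : {t | t ∈ PiSet Γ ∧ (∃ θ ∈ Γ, isoAct t θ = 1) ∧ (∃ θ ∈ Γ, isoAct t θ = 1)}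
      = PiSet Γ := by
    ext t
    simp only [Set.mem_setOf_eq, PiSet]
    tauto
  rw [hset, div_self]
  rw [hP]
  push_cast
  positivity
end
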